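/- arXiv:2406.14104 — 3 statements merged into one kernel-verified Lean document; each statement's English description precedes it below -/
import Mathlib

section
/- Let x ∈ J with supp(x) = ℕ and let (Aₙ) be a sequence of nonempty finite subsets of ℕ converging pointwise (as indicator functions) to A ⊆ ℕ. Then ‖x‖_{Aₙ} → ‖x‖_A, where for B ⊆ ℕ, ‖x‖_B denotes the quantity (∑ᵢ |∑_{k∈Iᵢ} x(k)|²)^{1/2} computed with the partition of ℕ into consecutive intervals determined by the cut points of B. -/
open Filter Topology Classical

noncomputable section

/-- Admissible finite families of pairwise disjoint, increasingly ordered intervals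
`[f i .1, f i .2]` of `ℕ`. -/
def Admissible (n : ℕ) (f : Fin n → ℕ × ℕ) : Prop :=
  (∀ i, (f i).1 ≤ (f i).2) ∧ ∀ i j : Fin n, i < j → (f i).2 < (f j).1

/-- The set of estimates appearing in the definition of the James norm. -/
def estimates (x : ℕ → ℝ) : Set ℝ :=
  {r | ∃ n, ∃ f : Fin n → ℕ × ℕ, Admissible n f ∧
    r = Real.sqrt (∑ i, (∑ k ∈ Finset.Icc (f i).1 (f i).2, x k) ^ 2)}

/-- `x` belongs to the James space `J`. -/
def MemJ (x : ℕ → ℝ) : Prop := BddAbove (estimates x)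

/-- The James norm. -/
def jamesNorm (x : ℕ → ℝ) : ℝ := sSup (estimates x)

/-- The ℓ² norm. -/
def l2Norm (x : ℕ → ℝ) : ℝ := Real.sqrt (∑' k, (x k) ^ 2)

/-- The closed unit ball of the James space. -/
def ballJ : Set (ℕ → ℝ) := {x | MemJ x ∧ jamesNorm x ≤ 1}

/-- The support of a sequence. -/
def supp (x : ℕ → ℝ) : Set ℕ := {n | x n ≠ 0}

/-- The (possibly infinite) sum of `x` over a subset `I` of `ℕ`,
as the limit of the partial sums. -/
def setSum (x : ℕ → ℝ) (I : Set ℕ) : ℝ :=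
  limUnder atTop (fun N => ∑ k ∈ Finset.range N, if k ∈ I then x k else 0)

/-- An `x`-norming family: a (finite or infinite) family of pairwise disjoint
nonempty intervals of `ℕ`, indexed by an initial segment `F` of `ℕ`, ordered
increasingly, whose interval sums exist and realize the James norm of `x`. -/
structure NormingFamily (x : ℕ → ℝ) where
  F : Set ℕ
  F_nonempty : F.Nonempty
  initial : ∀ ⦃m n : ℕ⦄, m ≤ n → n ∈ F → m ∈ F
  I : ℕ → Set ℕ
  I_nonempty : ∀ i ∈ F, (I i).Nonempty
  I_interval : ∀ i ∈ F, (I i).OrdConnected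
  ordered : ∀ i ∈ F, ∀ j ∈ F, i < j → ∀ a ∈ I i, ∀ b ∈ I j, a < b
  sums_exist : ∀ i ∈ F, ∃ l : ℝ,
    Tendsto (fun N => ∑ k ∈ Finset.range N, if k ∈ I i then x k else 0) atTop (𝓝 l)
  norming : ∑' i : F, (setSum x (I i)) ^ 2 = (jamesNorm x) ^ 2

/-- An `x`-norming partition: an `x`-norming family whose intervals cover the
support of `x`, every interval has its minimum in the support, every non-final
interval has its maximum in the support, and the final interval does not extend
beyond the supremum of the support. -/
structure NormingPartition (x : ℕ → ℝ) extends NormingFamily x where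
  covers : supp x ⊆ ⋃ i ∈ F, I i
  min_in_supp : ∀ i ∈ F, ∃ m ∈ I i ∩ supp x, ∀ k ∈ I i, m ≤ k
  max_in_supp : ∀ i ∈ F, (∃ j ∈ F, i < j) → ∃ m ∈ I i ∩ supp x, ∀ k ∈ I i, k ≤ m
  bounded_by_supp : ∀ i ∈ F, ∀ k ∈ I i, ∃ m ∈ supp x, k ≤ m

/-- `n₁ < n₂` are consecutive elements of the support of `x`. -/
def Consecutive (x : ℕ → ℝ) (n₁ n₂ : ℕ) : Prop :=
  n₁ ∈ supp x ∧ n₂ ∈ supp x ∧ n₁ < n₂ ∧ ∀ k, n₁ < k → k < n₂ → x k = 0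

end

/-- The `i`-th block of the partition of `ℕ` into consecutive intervals
determined by the cut points `B`: the elements `k` such that exactly `i`
elements of `B` lie strictly below `k`. -/
noncomputable def cutBlock (B : Set ℕ) (i : ℕ) : Set ℕ := {k | (B ∩ Set.Iio k).ncard = i}

/-- The norm estimate associated to a set `B` of cut points. -/
noncomputable def normEst (x : ℕ → ℝ) (B : Set ℕ) : ℝ :=
  Real.sqrt (∑' i : ℕ, (setSum x (cutBlock B i)) ^ 2)


section Aux

open Filter Topology Classical

/-- Partial sums of `x` over a set `I`. -/
noncomputable def Paux (x : ℕ → ℝ) (I : Set ℕ) (N : ℕ) : ℝ :=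
  ∑ k ∈ Finset.range N, if k ∈ I then x k else 0

lemma setSum_eq (x : ℕ → ℝ) (I : Set ℕ) : setSum x I = limUnder atTop (Paux x I) := rfl

/-- The number of cut points below `k`. -/
noncomputable def cB (B : Set ℕ) (k : ℕ) : ℕ := (B ∩ Set.Iio k).ncard

lemma mem_cutBlock_iff {B : Set ℕ} {i k : ℕ} : k ∈ cutBlock B i ↔ cB B k = i := Iff.rfl

lemma cB_mono (B : Set ℕ) : Monotone (cB B) := fun a b hab =>
  Set.ncard_le_ncard (Set.inter_subset_inter_right _ (Set.Iio_subset_Iio hab))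
    ((Set.finite_Iio b).inter_of_right B)

lemma cutBlock_lt {B : Set ℕ} {i j k k' : ℕ} (hij : i < j)
    (hk : k ∈ cutBlock B i) (hk' : k' ∈ cutBlock B j) : k < k' := by
  by_contra h
  push_neg at h
  have := cB_mono B h
  rw [mem_cutBlock_iff] at hk hk'
  omega

lemma zero_mem_estimates (x : ℕ → ℝ) : (0 : ℝ) ∈ estimates x := by
  refine ⟨0, Fin.elim0, ⟨fun i => i.elim0, fun i => i.elim0⟩, ?_⟩
  simp

lemma est_nonneg {x : ℕ → ℝ} {C : ℝ} (hC : ∀ r ∈ estimates x, r ≤ C) : 0 ≤ C :=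
  hC 0 (zero_mem_estimates x)

lemma est_sq_le {x : ℕ → ℝ} {C : ℝ} (hC : ∀ r ∈ estimates x, r ≤ C)
    {n : ℕ} {f : Fin n → ℕ × ℕ} (hf : Admissible n f) :
    ∑ i, (∑ k ∈ Finset.Icc (f i).1 (f i).2, x k) ^ 2 ≤ C ^ 2 := by
  have h0 : (0:ℝ) ≤ ∑ i, (∑ k ∈ Finset.Icc (f i).1 (f i).2, x k) ^ 2 :=
    Finset.sum_nonneg fun i _ => sq_nonneg _
  have h1 : Real.sqrt (∑ i, (∑ k ∈ Finset.Icc (f i).1 (f i).2, x k) ^ 2) ≤ C :=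
    hC _ ⟨n, f, hf, rfl⟩
  calc ∑ i, (∑ k ∈ Finset.Icc (f i).1 (f i).2, x k) ^ 2
      = (Real.sqrt (∑ i, (∑ k ∈ Finset.Icc (f i).1 (f i).2, x k) ^ 2)) ^ 2 :=
        (Real.sq_sqrt h0).symm
    _ ≤ C ^ 2 := by
        have := Real.sqrt_nonneg (∑ i, (∑ k ∈ Finset.Icc (f i).1 (f i).2, x k) ^ 2)
        nlinarith


lemma tailvar {x : ℕ → ℝ} (hx : MemJ x) {ε : ℝ} (hε : 0 < ε) :
    ∃ K : ℕ, ∀ (n : ℕ) (f : Fin n → ℕ × ℕ), Admissible n f → (∀ i, K ≤ (f i).1) →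
      ∑ i, (∑ k ∈ Finset.Icc (f i).1 (f i).2, x k) ^ 2 ≤ ε := by
  obtain ⟨C, hC⟩ := hx
  rw [mem_upperBounds] at hC
  by_contra h
  push_neg at h
  have key : ∀ m : ℕ, ∃ (n : ℕ) (f : Fin n → ℕ × ℕ) (E : ℕ), Admissible n f ∧
      (∀ i, (f i).2 < E) ∧
      (m : ℝ) * ε ≤ ∑ i, (∑ k ∈ Finset.Icc (f i).1 (f i).2, x k) ^ 2 := by
    intro m
    induction m with
    | zero =>
      exact ⟨0, Fin.elim0, 0, ⟨fun i => i.elim0, fun i => i.elim0⟩, fun i => i.elim0, by simp⟩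
    | succ m ih =>
      obtain ⟨n, f, E, hf, hfE, hsum⟩ := ih
      obtain ⟨p, g, hg, hgs, hgsum⟩ := h E
      have hrep : ∀ i : Fin (n + p),
          (∃ a : Fin n, (i : ℕ) = (a : ℕ) ∧ Fin.append f g i = f a) ∨
          (∃ b : Fin p, (i : ℕ) = n + (b : ℕ) ∧ Fin.append f g i = g b) := by
        intro i
        rcases lt_or_ge (i : ℕ) n with hi | hi
        · refine Or.inl ⟨⟨i, hi⟩, rfl, ?_⟩
          have hh : i = Fin.castAdd p ⟨i, hi⟩ := by ext; rfl
          conv_lhs => rw [hh]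
          exact Fin.append_left f g _
        · have hb : (i : ℕ) - n < p := by have := i.isLt; omega
          refine Or.inr ⟨⟨(i : ℕ) - n, hb⟩, by simp; omega, ?_⟩
          have hh : i = Fin.natAdd n ⟨(i : ℕ) - n, hb⟩ := by
            ext; simp [Fin.natAdd]; omega
          conv_lhs => rw [hh]
          exact Fin.append_right f g _
      refine ⟨n + p, Fin.append f g,
        max E ((Finset.univ.sup fun i => (g i).2) + 1), ⟨?_, ?_⟩, ?_, ?_⟩
      · intro i
        rcases hrep i with ⟨a, _, hEq⟩ | ⟨b, _, hEq⟩
        · rw [hEq]; exact hf.1 a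
        · rw [hEq]; exact hg.1 b
      · intro i j hij
        have hij' : (i : ℕ) < (j : ℕ) := hij
        rcases hrep i with ⟨a, ha, hEqi⟩ | ⟨b, hb, hEqi⟩ <;>
          rcases hrep j with ⟨a', ha', hEqj⟩ | ⟨b', hb', hEqj⟩
        · rw [hEqi, hEqj]; exact hf.2 a a' (by rw [Fin.lt_def]; omega)
        · rw [hEqi, hEqj]
          calc (f a).2 < E := hfE a
            _ ≤ (g b').1 := hgs b'
        · have := a'.isLt; omega
        · rw [hEqi, hEqj]; exact hg.2 b b' (by rw [Fin.lt_def]; omega)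
      · intro i
        rcases hrep i with ⟨a, _, hEq⟩ | ⟨b, _, hEq⟩
        · rw [hEq]
          calc (f a).2 < E := hfE a
            _ ≤ _ := le_max_left _ _
        · rw [hEq]
          calc (g b).2 ≤ Finset.univ.sup fun i => (g i).2 :=
                Finset.le_sup (f := fun i => (g i).2) (Finset.mem_univ b)
            _ < (Finset.univ.sup fun i => (g i).2) + 1 := Nat.lt_succ_self _
            _ ≤ _ := le_max_right _ _
      · rw [Fin.sum_univ_add]
        simp only [Fin.append_left, Fin.append_right]
        calc ((m + 1 : ℕ) : ℝ) * ε = (m : ℝ) * ε + ε := by push_cast; ring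
          _ ≤ _ := add_le_add hsum (le_of_lt hgsum)
  obtain ⟨m, hm⟩ := exists_nat_gt (C ^ 2 / ε)
  obtain ⟨n, f, E, hf, _, hsum⟩ := key m
  have h1 : ∑ i, (∑ k ∈ Finset.Icc (f i).1 (f i).2, x k) ^ 2 ≤ C ^ 2 := est_sq_le hC hf
  have h2 : C ^ 2 < (m : ℝ) * ε := by
    rw [div_lt_iff₀ hε] at hm
    linarith
  linarith



/-- least element of a block -/
noncomputable def bs (B : Set ℕ) (i : ℕ) : ℕ := sInf (cutBlock B i)

/-- greatest element of a block below `M` -/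
noncomputable def bm (B : Set ℕ) (i M : ℕ) : ℕ := sSup (cutBlock B i ∩ Set.Iio M)

lemma P_eq (x : ℕ → ℝ) {B : Set ℕ} {i M : ℕ} (hne : (cutBlock B i ∩ Set.Iio M).Nonempty) :
    bs B i ∈ cutBlock B i ∧ bm B i M ∈ cutBlock B i ∧ bs B i ≤ bm B i M ∧ bm B i M < M ∧
    (∀ k ∈ cutBlock B i, k < M → k ≤ bm B i M) ∧
    Paux x (cutBlock B i) M = ∑ k ∈ Finset.Icc (bs B i) (bm B i M), x k := by
  have hbd : BddAbove (cutBlock B i ∩ Set.Iio M) :=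
    ((Set.finite_Iio M).inter_of_right _).bddAbove
  have hmem : bm B i M ∈ cutBlock B i ∩ Set.Iio M := Nat.sSup_mem hne hbd
  obtain ⟨hbm_block, hbmM'⟩ := hmem
  have hbmM : bm B i M < M := hbmM'
  have hblock_ne : (cutBlock B i).Nonempty := ⟨_, hbm_block⟩
  have hbs : bs B i ∈ cutBlock B i := Nat.sInf_mem hblock_ne
  have hle : bs B i ≤ bm B i M := Nat.sInf_le hbm_block
  have hub : ∀ k ∈ cutBlock B i, k < M → k ≤ bm B i M := fun k hk hkM =>
    le_csSup hbd ⟨hk, hkM⟩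
  refine ⟨hbs, hbm_block, hle, hbmM, hub, ?_⟩
  have hS1 : Finset.Icc (bs B i) (bm B i M) ⊆ Finset.range M := by
    intro k hk; rw [Finset.mem_Icc] at hk; rw [Finset.mem_range]; omega
  have hS2 : ∀ k ∈ Finset.Icc (bs B i) (bm B i M), k ∈ cutBlock B i := by
    intro k hk; rw [Finset.mem_Icc] at hk
    have h1 := cB_mono B hk.1
    have h2 := cB_mono B hk.2
    rw [mem_cutBlock_iff] at hbs hbm_block ⊢
    omega
  have hzero : ∀ k ∈ Finset.range M, k ∉ Finset.Icc (bs B i) (bm B i M) →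
      (if k ∈ cutBlock B i then x k else 0) = 0 := by
    intro k hkM hk
    refine if_neg fun hkb => hk ?_
    rw [Finset.mem_Icc]
    exact ⟨Nat.sInf_le hkb, hub k hkb (Finset.mem_range.1 hkM)⟩
  calc Paux x (cutBlock B i) M
      = ∑ k ∈ Finset.Icc (bs B i) (bm B i M), if k ∈ cutBlock B i then x k else 0 :=
        (Finset.sum_subset hS1 hzero).symm
    _ = ∑ k ∈ Finset.Icc (bs B i) (bm B i M), x k :=
        Finset.sum_congr rfl fun k hk => if_pos (hS2 k hk)

lemma cutBlock_infinite_eq {B : Set ℕ} {i : ℕ} (h : (cutBlock B i).Infinite) :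
    cutBlock B i = Set.Ici (bs B i) := by
  have hne : (cutBlock B i).Nonempty := h.nonempty
  have hbs : bs B i ∈ cutBlock B i := Nat.sInf_mem hne
  ext k
  simp only [Set.mem_Ici]
  constructor
  · exact fun hk => Nat.sInf_le hk
  · intro hk
    obtain ⟨k', hk', hkk'⟩ := h.exists_gt k
    have h1 := cB_mono B hk
    have h2 := cB_mono B (le_of_lt hkk')
    rw [mem_cutBlock_iff] at hbs hk' ⊢
    omega

lemma single_est {x : ℕ → ℝ} {ε : ℝ} {K₀ : ℕ}
    (hb : ∀ (n : ℕ) (f : Fin n → ℕ × ℕ), Admissible n f → (∀ i, K₀ ≤ (f i).1) →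
      ∑ i, (∑ k ∈ Finset.Icc (f i).1 (f i).2, x k) ^ 2 ≤ ε)
    {a b : ℕ} (hab : a ≤ b) (ha : K₀ ≤ a) :
    (∑ k ∈ Finset.Icc a b, x k) ^ 2 ≤ ε := by
  have := hb 1 (fun _ => (a, b))
    ⟨fun _ => hab, fun i j hij =>
      absurd (show (i : ℕ) < (j : ℕ) from hij)
        (by have := i.isLt; have := j.isLt; omega)⟩
    (fun _ => ha)
  simpa using this

lemma P_tendsto {x : ℕ → ℝ} (hx : MemJ x) (B : Set ℕ) (i : ℕ) :
    Tendsto (Paux x (cutBlock B i)) atTop (𝓝 (setSum x (cutBlock B i))) := by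
  have hex : ∃ l, Tendsto (Paux x (cutBlock B i)) atTop (𝓝 l) := by
    rcases Set.finite_or_infinite (cutBlock B i) with hfin | hinf
    · obtain ⟨M₀, hM₀⟩ : ∃ M₀, ∀ k ∈ cutBlock B i, k < M₀ := by
        rcases hfin.bddAbove with ⟨b, hb⟩
        exact ⟨b + 1, fun k hk => Nat.lt_succ_of_le (hb hk)⟩
      refine ⟨Paux x (cutBlock B i) M₀, tendsto_atTop_of_eventually_const (i₀ := M₀) ?_⟩
      intro M hM
      have hsplit : Paux x (cutBlock B i) M = Paux x (cutBlock B i) M₀ +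
          ∑ k ∈ Finset.Ico M₀ M, (if k ∈ cutBlock B i then x k else 0) := by
        simp only [Paux]
        rw [Finset.range_eq_Ico,
          ← Finset.sum_Ico_consecutive _ (Nat.zero_le M₀) hM, Finset.range_eq_Ico]
      rw [hsplit, Finset.sum_eq_zero, add_zero]
      intro k hk
      rw [Finset.mem_Ico] at hk
      exact if_neg fun hkb => absurd (hM₀ k hkb) (by omega)
    · apply cauchySeq_tendsto_of_complete
      rw [Metric.cauchySeq_iff']
      intro ε hε
      obtain ⟨K, hK⟩ := tailvar hx (show (0:ℝ) < (ε/2)^2 by positivity)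
      have hIci := cutBlock_infinite_eq hinf
      refine ⟨max (bs B i + 1) K, fun n hn => ?_⟩
      set N := max (bs B i + 1) K with hNdef
      rcases eq_or_lt_of_le hn with heq | hlt
      · rw [← heq]; simpa [dist_self] using hε
      · rw [Real.dist_eq]
        obtain ⟨n', rfl⟩ : ∃ n', n = n' + 1 := ⟨n - 1, by omega⟩
        have hNn' : N ≤ n' := by omega
        have hsplit : Paux x (cutBlock B i) (n' + 1) - Paux x (cutBlock B i) N =
            ∑ k ∈ Finset.Ico N (n' + 1), (if k ∈ cutBlock B i then x k else 0) := by
          simp only [Paux]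
          rw [Finset.range_eq_Ico,
            ← Finset.sum_Ico_consecutive _ (Nat.zero_le N) (by omega : N ≤ n' + 1), Finset.range_eq_Ico]
          ring
        have hIco : (∑ k ∈ Finset.Ico N (n' + 1), if k ∈ cutBlock B i then x k else 0) =
            ∑ k ∈ Finset.Icc N n', x k := by
          rw [Finset.Ico_add_one_right_eq_Icc]
          refine Finset.sum_congr rfl fun k hk => if_pos ?_
          rw [Finset.mem_Icc] at hk
          rw [hIci]
          have hbsN : bs B i + 1 ≤ N := le_max_left _ _
          exact le_trans (by omega : bs B i ≤ N) hk.1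
        have hsq : (∑ k ∈ Finset.Icc N n', x k) ^ 2 ≤ (ε / 2) ^ 2 :=
          single_est hK hNn' (le_max_right _ _)
        have habs : |∑ k ∈ Finset.Icc N n', x k| ≤ ε / 2 := by
          have h1 := Real.sqrt_le_sqrt hsq
          rwa [Real.sqrt_sq_eq_abs, Real.sqrt_sq (by positivity)] at h1
        calc |Paux x (cutBlock B i) (n' + 1) - Paux x (cutBlock B i) N|
            = |∑ k ∈ Finset.Icc N n', x k| := by rw [hsplit, hIco]
          _ ≤ ε / 2 := habs
          _ < ε := by linarith
  obtain ⟨l, hl⟩ := hex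
  rw [setSum_eq, hl.limUnder_eq]
  exact hl



lemma sum_P_sq_le {x : ℕ → ℝ} {ε : ℝ} {K₀ : ℕ}
    (hb : ∀ (n : ℕ) (f : Fin n → ℕ × ℕ), Admissible n f → (∀ i, K₀ ≤ (f i).1) →
      ∑ i, (∑ k ∈ Finset.Icc (f i).1 (f i).2, x k) ^ 2 ≤ ε)
    (B : Set ℕ) (G : Finset ℕ) (hG : ∀ i ∈ G, ∀ k ∈ cutBlock B i, K₀ ≤ k) (M : ℕ) :
    ∑ i ∈ G, (Paux x (cutBlock B i) M) ^ 2 ≤ ε := by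
  classical
  set F := G.filter (fun i => (cutBlock B i ∩ Set.Iio M).Nonempty) with hF
  have hFG : F ⊆ G := Finset.filter_subset _ _
  have hzero : ∀ i ∈ G, i ∉ F → (Paux x (cutBlock B i) M) ^ 2 = 0 := by
    intro i hiG hiF
    have hem : ¬ (cutBlock B i ∩ Set.Iio M).Nonempty := by
      intro hne; exact hiF (Finset.mem_filter.2 ⟨hiG, hne⟩)
    have hP : Paux x (cutBlock B i) M = 0 := by
      apply Finset.sum_eq_zero
      intro k hk
      exact if_neg fun hkb => hem ⟨k, hkb, Finset.mem_range.1 hk⟩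
    rw [hP]; ring
  rw [← Finset.sum_subset hFG hzero]
  set e := F.orderIsoOfFin (rfl : F.card = F.card) with he
  set f : Fin F.card → ℕ × ℕ := fun t => (bs B (e t), bm B ((e t) : ℕ) M) with hfdef
  have hmemF : ∀ i ∈ F, (cutBlock B i ∩ Set.Iio M).Nonempty := fun i hi =>
    (Finset.mem_filter.1 hi).2
  have hadm : Admissible F.card f := by
    constructor
    · intro t
      exact (P_eq x (hmemF _ (e t).2)).2.2.1
    · intro t t' htt'
      have h1 := (P_eq x (hmemF _ (e t).2)).2.1
      have h2 := (P_eq x (hmemF _ (e t').2)).1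
      have hlt : ((e t) : ℕ) < ((e t') : ℕ) := Subtype.coe_lt_coe.2 (e.strictMono htt')
      exact cutBlock_lt hlt h1 h2
  have hstart : ∀ t, K₀ ≤ (f t).1 := fun t =>
    hG _ (hFG (e t).2) _ (P_eq x (hmemF _ (e t).2)).1
  have hmain := hb F.card f hadm hstart
  have hsum : ∑ t : Fin F.card, (∑ k ∈ Finset.Icc (f t).1 (f t).2, x k) ^ 2
      = ∑ i ∈ F, (Paux x (cutBlock B i) M) ^ 2 := by
    have h1 : ∀ t : Fin F.card, (∑ k ∈ Finset.Icc (f t).1 (f t).2, x k) ^ 2 =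
        (Paux x (cutBlock B ((e t) : ℕ)) M) ^ 2 := fun t => by
      rw [(P_eq x (hmemF _ (e t).2)).2.2.2.2.2]
    calc ∑ t : Fin F.card, (∑ k ∈ Finset.Icc (f t).1 (f t).2, x k) ^ 2
        = ∑ t : Fin F.card, (Paux x (cutBlock B ((e t) : ℕ)) M) ^ 2 :=
          Finset.sum_congr rfl fun t _ => h1 t
      _ = ∑ i : {y // y ∈ F}, (Paux x (cutBlock B (i : ℕ)) M) ^ 2 :=
          Equiv.sum_comp e.toEquiv (fun i : {y // y ∈ F} => (Paux x (cutBlock B (i : ℕ)) M) ^ 2)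
      _ = ∑ i ∈ F, (Paux x (cutBlock B i) M) ^ 2 := Finset.sum_coe_sort F (fun i => (Paux x (cutBlock B i) M) ^ 2)
  rw [← hsum]
  exact hmain

lemma sum_sq_le {x : ℕ → ℝ} (hx : MemJ x) {ε : ℝ} {K₀ : ℕ}
    (hb : ∀ (n : ℕ) (f : Fin n → ℕ × ℕ), Admissible n f → (∀ i, K₀ ≤ (f i).1) →
      ∑ i, (∑ k ∈ Finset.Icc (f i).1 (f i).2, x k) ^ 2 ≤ ε)
    (B : Set ℕ) (G : Finset ℕ) (hG : ∀ i ∈ G, ∀ k ∈ cutBlock B i, K₀ ≤ k) :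
    ∑ i ∈ G, (setSum x (cutBlock B i)) ^ 2 ≤ ε := by
  have ht : Tendsto (fun M => ∑ i ∈ G, (Paux x (cutBlock B i) M) ^ 2) atTop
      (𝓝 (∑ i ∈ G, (setSum x (cutBlock B i)) ^ 2)) :=
    tendsto_finset_sum _ (fun i _ => (P_tendsto hx B i).pow 2)
  exact le_of_tendsto' ht (fun M => sum_P_sq_le hb B G hG M)

lemma summable_sq {x : ℕ → ℝ} (hx : MemJ x) (B : Set ℕ) :
    Summable (fun i => (setSum x (cutBlock B i)) ^ 2) := by
  obtain ⟨C, hCmem⟩ := id hx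
  have hC := mem_upperBounds.1 hCmem
  apply summable_of_sum_range_le (fun i => sq_nonneg _)
  intro n
  exact sum_sq_le hx (fun n f hf _ => est_sq_le hC hf) B (Finset.range n)
    (fun i _ k _ => Nat.zero_le k)

lemma cB_eq_of_agree {A B : Set ℕ} {K k : ℕ} (h : ∀ m < K, (m ∈ A ↔ m ∈ B)) (hk : k ≤ K) :
    cB A k = cB B k := by
  unfold cB
  congr 1
  ext m
  simp only [Set.mem_inter_iff, Set.mem_Iio]
  constructor
  · rintro ⟨hm, hmk⟩; exact ⟨(h m (by omega)).1 hm, hmk⟩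
  · rintro ⟨hm, hmk⟩; exact ⟨(h m (by omega)).2 hm, hmk⟩

lemma cutBlock_eq_of_lt {A B : Set ℕ} {K i : ℕ} (h : ∀ m < K + 1, (m ∈ A ↔ m ∈ B))
    (hi : i < cB B K) : cutBlock A i = cutBlock B i := by
  have hcBK : cB A K = cB B K := cB_eq_of_agree h (by omega)
  ext k
  simp only [mem_cutBlock_iff]
  constructor
  · intro hk
    have hkK : k ≤ K := by
      by_contra hgt
      have := cB_mono A (by omega : K ≤ k)
      omega
    rw [← cB_eq_of_agree h (by omega : k ≤ K + 1)]
    exact hk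
  · intro hk
    have hkK : k ≤ K := by
      by_contra hgt
      have := cB_mono B (by omega : K ≤ k)
      omega
    rw [cB_eq_of_agree h (by omega : k ≤ K + 1)]
    exact hk



lemma blockj_dev {x : ℕ → ℝ} (hx : MemJ x) {ε : ℝ} {K₁ : ℕ}
    (htv : ∀ (n : ℕ) (f : Fin n → ℕ × ℕ), Admissible n f → (∀ i, K₁ ≤ (f i).1) →
      ∑ i, (∑ k ∈ Finset.Icc (f i).1 (f i).2, x k) ^ 2 ≤ ε)
    (B : Set ℕ) (K : ℕ) (hK : K₁ ≤ K) :
    |setSum x (cutBlock B (cB B K)) - ∑ k ∈ Finset.Icc (bs B (cB B K)) K, x k| ≤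
      Real.sqrt ε := by
  have hKmem : K ∈ cutBlock B (cB B K) := rfl
  have key : ∀ M, K < M →
      |Paux x (cutBlock B (cB B K)) M - ∑ k ∈ Finset.Icc (bs B (cB B K)) K, x k| ≤
        Real.sqrt ε := by
    intro M hM
    have hne : (cutBlock B (cB B K) ∩ Set.Iio M).Nonempty := ⟨K, hKmem, hM⟩
    obtain ⟨hbs, hbm, hbsbm, hbmM, hub, hPeq⟩ := P_eq x hne
    have hKbm : K ≤ bm B (cB B K) M := hub K hKmem hM
    have hbsK : bs B (cB B K) ≤ K := Nat.sInf_le hKmem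
    rcases eq_or_lt_of_le hKbm with heq | hltK
    · rw [hPeq, ← heq]
      simpa using Real.sqrt_nonneg ε
    · rw [hPeq]
      have hsplit : ∑ k ∈ Finset.Icc (bs B (cB B K)) (bm B (cB B K) M), x k
          = (∑ k ∈ Finset.Icc (bs B (cB B K)) K, x k) +
            ∑ k ∈ Finset.Icc (K + 1) (bm B (cB B K) M), x k := by
        rw [← Finset.Ico_add_one_right_eq_Icc (bs B (cB B K)) (bm B (cB B K) M),
          ← Finset.Ico_add_one_right_eq_Icc (bs B (cB B K)) K,
          ← Finset.Ico_add_one_right_eq_Icc (K + 1) (bm B (cB B K) M),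
          ← Finset.sum_Ico_consecutive (fun k => x k)
            (show bs B (cB B K) ≤ K + 1 by omega)
            (show K + 1 ≤ bm B (cB B K) M + 1 by omega)]
      have hsq : (∑ k ∈ Finset.Icc (K + 1) (bm B (cB B K) M), x k) ^ 2 ≤ ε :=
        single_est htv (by omega) (by omega)
      have habs : |∑ k ∈ Finset.Icc (K + 1) (bm B (cB B K) M), x k| ≤ Real.sqrt ε := by
        rw [← Real.sqrt_sq_eq_abs]; exact Real.sqrt_le_sqrt hsq
      rw [hsplit, add_sub_cancel_left]
      exact habs
  have htend : Tendsto
      (fun M => |Paux x (cutBlock B (cB B K)) M - ∑ k ∈ Finset.Icc (bs B (cB B K)) K, x k|)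
      atTop (𝓝 |setSum x (cutBlock B (cB B K)) - ∑ k ∈ Finset.Icc (bs B (cB B K)) K, x k|) :=
    ((P_tendsto hx B (cB B K)).sub tendsto_const_nhds).abs
  apply le_of_tendsto htend
  filter_upwards [eventually_gt_atTop K] with M hM using key M hM

lemma tail_sq_le {x : ℕ → ℝ} (hx : MemJ x) {ε : ℝ} {K₁ : ℕ}
    (htv : ∀ (n : ℕ) (f : Fin n → ℕ × ℕ), Admissible n f → (∀ i, K₁ ≤ (f i).1) →
      ∑ i, (∑ k ∈ Finset.Icc (f i).1 (f i).2, x k) ^ 2 ≤ ε)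
    (B : Set ℕ) (K : ℕ) (hK : K₁ ≤ K) :
    ∑' i : ℕ, (setSum x (cutBlock B (i + (cB B K + 1)))) ^ 2 ≤ ε := by
  have hsummable : Summable (fun i => (setSum x (cutBlock B (i + (cB B K + 1)))) ^ 2) :=
    (summable_sq hx B).comp_injective (fun a b h => by omega)
  apply Summable.tsum_le_of_sum_range_le hsummable
  intro N
  have himage : ∑ i ∈ Finset.range N, (setSum x (cutBlock B (i + (cB B K + 1)))) ^ 2
      = ∑ i ∈ (Finset.range N).image (fun t => t + (cB B K + 1)),
          (setSum x (cutBlock B i)) ^ 2 := by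
    rw [Finset.sum_image (fun a _ b _ h => by omega)]
  rw [himage]
  apply sum_sq_le hx htv B _ ?_
  intro i hi k hk
  rw [Finset.mem_image] at hi
  obtain ⟨t, _, rfl⟩ := hi
  have hgt : cB B K < cB B k := by
    rw [mem_cutBlock_iff] at hk; omega
  by_contra hlt
  push_neg at hlt
  have := cB_mono B (show k ≤ K by omega)
  omega


end Aux

open Filter Topology in
theorem stmt12 (x : ℕ → ℝ) (hx : MemJ x) (hsupp : supp x = Set.univ)
    (A : ℕ → Set ℕ) (hfin : ∀ n, (A n).Finite) (hne : ∀ n, (A n).Nonempty)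
    (B : Set ℕ) (hconv : ∀ k : ℕ, ∃ N, ∀ n ≥ N, (k ∈ A n ↔ k ∈ B)) :
    Tendsto (fun n => normEst x (A n)) atTop (𝓝 (normEst x B)) := by
  classical
  obtain ⟨C, hCmem⟩ := id hx
  have hC := mem_upperBounds.1 hCmem
  have hC0 : 0 ≤ C := est_nonneg hC
  have h45 : (0:ℝ) < 4 * C + 5 := by linarith
  have hT : Tendsto (fun n => ∑' i : ℕ, (setSum x (cutBlock (A n) i)) ^ 2) atTop
      (𝓝 (∑' i : ℕ, (setSum x (cutBlock B i)) ^ 2)) := by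
    rw [Metric.tendsto_atTop]
    intro δ hδ
    set ε := min 1 ((δ / 2 / (4 * C + 5)) ^ 2) with hεdef
    have hε : 0 < ε := lt_min one_pos (pow_pos (div_pos (by linarith) h45) 2)
    obtain ⟨K₁, htv⟩ := tailvar hx hε
    set s := Real.sqrt ε with hsdef
    have hs0 : 0 ≤ s := Real.sqrt_nonneg _
    have hs1 : s ≤ 1 := by
      rw [hsdef]
      calc Real.sqrt ε ≤ Real.sqrt 1 := Real.sqrt_le_sqrt (min_le_left _ _)
        _ = 1 := Real.sqrt_one
    have hεs : ε ≤ s := by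
      have : ε = s * s := by rw [hsdef, Real.mul_self_sqrt hε.le]
      nlinarith
    have hs2 : (4 * C + 5) * s ≤ δ / 2 := by
      have h1 : s ≤ δ / 2 / (4 * C + 5) := by
        rw [hsdef]
        calc Real.sqrt ε ≤ Real.sqrt ((δ / 2 / (4 * C + 5)) ^ 2) :=
              Real.sqrt_le_sqrt (min_le_right _ _)
          _ = δ / 2 / (4 * C + 5) := Real.sqrt_sq (div_pos (by linarith) h45).le
      calc (4 * C + 5) * s ≤ (4 * C + 5) * (δ / 2 / (4 * C + 5)) := by nlinarith
        _ = δ / 2 := by field_simp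
    obtain ⟨N₀, hN₀⟩ : ∃ N₀, ∀ n ≥ N₀, ∀ m < K₁ + 1, (m ∈ A n ↔ m ∈ B) := by
      choose Nk hNk using hconv
      exact ⟨(Finset.range (K₁ + 1)).sup Nk, fun n hn m hm =>
        hNk m n (le_trans (Finset.le_sup (Finset.mem_range.2 hm)) hn)⟩
    refine ⟨N₀, fun n hn => ?_⟩
    have hAB := hN₀ n hn
    have hjA : cB (A n) K₁ = cB B K₁ := cB_eq_of_agree hAB (by omega)
    have hKmemB : K₁ ∈ cutBlock B (cB B K₁) := rfl
    have hKmemA : K₁ ∈ cutBlock (A n) (cB B K₁) := by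
      rw [mem_cutBlock_iff]; exact hjA
    have hbsB_le : bs B (cB B K₁) ≤ K₁ := Nat.sInf_le hKmemB
    have hbsB_mem : bs B (cB B K₁) ∈ cutBlock B (cB B K₁) := Nat.sInf_mem ⟨K₁, hKmemB⟩
    have hbsA_mem : bs (A n) (cB B K₁) ∈ cutBlock (A n) (cB B K₁) :=
      Nat.sInf_mem ⟨K₁, hKmemA⟩
    have hbsA_le : bs (A n) (cB B K₁) ≤ K₁ := Nat.sInf_le hKmemA
    have hbsEq : bs (A n) (cB B K₁) = bs B (cB B K₁) := by
      apply le_antisymm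
      · apply Nat.sInf_le
        rw [mem_cutBlock_iff, cB_eq_of_agree hAB (by omega : bs B (cB B K₁) ≤ K₁ + 1)]
        exact hbsB_mem
      · apply Nat.sInf_le
        rw [mem_cutBlock_iff, ← cB_eq_of_agree hAB (by omega : bs (A n) (cB B K₁) ≤ K₁ + 1)]
        exact hbsA_mem
    -- the common initial sum
    have hcommon : ∑ i ∈ Finset.range (cB B K₁), (setSum x (cutBlock (A n) i)) ^ 2 =
        ∑ i ∈ Finset.range (cB B K₁), (setSum x (cutBlock B i)) ^ 2 :=
      Finset.sum_congr rfl fun i hi => by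
        rw [cutBlock_eq_of_lt hAB (Finset.mem_range.1 hi)]
    -- block j deviations
    have hdevB := blockj_dev hx htv B K₁ (le_refl K₁)
    have hdevA := blockj_dev hx htv (A n) K₁ (le_refl K₁)
    rw [hjA, hbsEq] at hdevA
    -- σ bound
    have hσ : |∑ k ∈ Finset.Icc (bs B (cB B K₁)) K₁, x k| ≤ C := by
      have hsq : (∑ k ∈ Finset.Icc (bs B (cB B K₁)) K₁, x k) ^ 2 ≤ C ^ 2 :=
        single_est (fun p f hf _ => est_sq_le hC hf) hbsB_le (Nat.zero_le _)
      rw [← Real.sqrt_sq_eq_abs]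
      calc Real.sqrt ((∑ k ∈ Finset.Icc (bs B (cB B K₁)) K₁, x k) ^ 2)
          ≤ Real.sqrt (C ^ 2) := Real.sqrt_le_sqrt hsq
        _ = C := Real.sqrt_sq hC0
    -- tails
    have htailB_le := tail_sq_le hx htv B K₁ (le_refl K₁)
    have htailA_le := tail_sq_le hx htv (A n) K₁ (le_refl K₁)
    rw [hjA] at htailA_le
    have htailB_0 : 0 ≤ ∑' i : ℕ, (setSum x (cutBlock B (i + (cB B K₁ + 1)))) ^ 2 :=
      tsum_nonneg fun i => sq_nonneg _
    have htailA_0 : 0 ≤ ∑' i : ℕ, (setSum x (cutBlock (A n) (i + (cB B K₁ + 1)))) ^ 2 :=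
      tsum_nonneg fun i => sq_nonneg _
    -- tsum splittings
    have hsplitB := (Summable.sum_add_tsum_nat_add (f := fun i => (setSum x (cutBlock B i)) ^ 2)
      (cB B K₁ + 1) (summable_sq hx B)).symm
    have hsplitA := (Summable.sum_add_tsum_nat_add (f := fun i => (setSum x (cutBlock (A n) i)) ^ 2)
      (cB B K₁ + 1) (summable_sq hx (A n))).symm
    set sB := setSum x (cutBlock B (cB B K₁)) with hsB
    set sA := setSum x (cutBlock (A n) (cB B K₁)) with hsA
    set σ := ∑ k ∈ Finset.Icc (bs B (cB B K₁)) K₁, x k with hσdef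
    set tailB := ∑' i : ℕ, (setSum x (cutBlock B (i + (cB B K₁ + 1)))) ^ 2 with htB
    set tailA := ∑' i : ℕ, (setSum x (cutBlock (A n) (i + (cB B K₁ + 1)))) ^ 2 with htA
    have hexp : (∑' i : ℕ, (setSum x (cutBlock (A n) i)) ^ 2) -
        (∑' i : ℕ, (setSum x (cutBlock B i)) ^ 2) =
        (sA ^ 2 - sB ^ 2) + (tailA - tailB) := by
      rw [hsplitA, hsplitB, Finset.sum_range_succ, Finset.sum_range_succ, hcommon]
      ring
    -- quantitative bounds
    have h1 : |sA - sB| ≤ 2 * s := by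
      calc |sA - sB| ≤ |sA - σ| + |σ - sB| := abs_sub_le sA σ sB
        _ = |sA - σ| + |sB - σ| := by rw [abs_sub_comm σ sB]
        _ ≤ s + s := add_le_add hdevA hdevB
        _ = 2 * s := by ring
    have h2 : |sA + sB| ≤ 2 * C + 2 * s := by
      have hA' : |sA| ≤ C + s := by
        calc |sA| = |(sA - σ) + σ| := by ring_nf
          _ ≤ |sA - σ| + |σ| := abs_add_le _ _
          _ ≤ s + C := add_le_add hdevA hσ
          _ = C + s := by ring
      have hB' : |sB| ≤ C + s := by
        calc |sB| = |(sB - σ) + σ| := by ring_nf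
          _ ≤ |sB - σ| + |σ| := abs_add_le _ _
          _ ≤ s + C := add_le_add hdevB hσ
          _ = C + s := by ring
      calc |sA + sB| ≤ |sA| + |sB| := abs_add_le _ _
        _ ≤ (C + s) + (C + s) := add_le_add hA' hB'
        _ = 2 * C + 2 * s := by ring
    have h3 : |sA ^ 2 - sB ^ 2| ≤ (2 * C + 2 * s) * (2 * s) := by
      rw [sq_sub_sq, abs_mul]
      exact mul_le_mul h2 h1 (abs_nonneg _) (by linarith)
    have h4 : |tailA - tailB| ≤ ε := by
      rw [abs_le]
      constructor <;> linarith
    have h5 : |(∑' i : ℕ, (setSum x (cutBlock (A n) i)) ^ 2) -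
        (∑' i : ℕ, (setSum x (cutBlock B i)) ^ 2)| ≤ (2 * C + 2 * s) * (2 * s) + ε := by
      rw [hexp]
      calc |(sA ^ 2 - sB ^ 2) + (tailA - tailB)| ≤ |sA ^ 2 - sB ^ 2| + |tailA - tailB| :=
            abs_add_le _ _
        _ ≤ (2 * C + 2 * s) * (2 * s) + ε := add_le_add h3 h4
    rw [Real.dist_eq]
    have h6 : (2 * C + 2 * s) * (2 * s) + ε ≤ δ / 2 := by nlinarith
    calc |(∑' i : ℕ, (setSum x (cutBlock (A n) i)) ^ 2) -
        (∑' i : ℕ, (setSum x (cutBlock B i)) ^ 2)| ≤ (2 * C + 2 * s) * (2 * s) + ε := h5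
      _ ≤ δ / 2 := h6
      _ < δ := by linarith
  have hcomp := (Real.continuous_sqrt.tendsto (∑' i : ℕ, (setSum x (cutBlock B i)) ^ 2)).comp hT
  simpa [normEst, Function.comp_def] using hcomp
end

section
/- Let x ∈ J, x ≠ 0, and let 𝓘 = {Iᵢ}_{i∈F} and 𝓛 = {Lⱼ}_{j∈G} be two x-norming partitions. Then for every i ∈ F and j ∈ G, either Iᵢ ⊆ Lⱼ, or Lⱼ ⊆ Iᵢ, or Iᵢ ∩ Lⱼ = ∅. -/
open Filter Topology Classical

namespace JamesAux

noncomputable section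
open Filter Topology Classical

variable {x : ℕ → ℝ}

/-- The value of a finite list of intervals. -/
def val (x : ℕ → ℝ) (l : List (ℕ × ℕ)) : ℝ :=
  (l.map (fun p => (∑ k ∈ Finset.Icc p.1 p.2, x k) ^ 2)).sum

lemma val_nil : val x [] = 0 := rfl

lemma val_append (l l' : List (ℕ × ℕ)) : val x (l ++ l') = val x l + val x l' := by
  simp [val]

lemma val_singleton (p : ℕ × ℕ) :
    val x [p] = (∑ k ∈ Finset.Icc p.1 p.2, x k) ^ 2 := by
  simp [val]

lemma val_nonneg (l : List (ℕ × ℕ)) : 0 ≤ val x l := by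
  induction l with
  | nil => simp [val]
  | cons a t ih =>
      have : val x (a :: t) = (∑ k ∈ Finset.Icc a.1 a.2, x k) ^ 2 + val x t := by
        simp [val]
      rw [this]
      positivity

lemma sum_map_get {α β : Type*} [AddCommMonoid β] (f : α → β) :
    ∀ l : List α, (l.map f).sum = ∑ i : Fin l.length, f (l.get i) := by
  intro l
  induction l with
  | nil => simp
  | cons a t ih =>
      rw [List.map_cons, List.sum_cons, ih]
      exact (Fin.sum_univ_succ (fun i : Fin (t.length + 1) => f ((a :: t).get i))).symm

lemma zero_mem_estimates : (0 : ℝ) ∈ estimates x := by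
  refine ⟨0, fun i => i.elim0, ⟨fun i => i.elim0, fun i => i.elim0⟩, ?_⟩
  simp

lemma jamesNorm_nonneg (hx : MemJ x) : 0 ≤ jamesNorm x :=
  le_csSup hx zero_mem_estimates

/-- Any admissibly-listed value is at most the squared norm. -/
lemma val_le (hx : MemJ x) (l : List (ℕ × ℕ))
    (hpw : l.Pairwise (fun p q => p.2 < q.1)) (hle : ∀ p ∈ l, p.1 ≤ p.2) :
    val x l ≤ jamesNorm x ^ 2 := by
  have hvadm : Admissible l.length l.get := by
    constructor
    · intro i
      exact hle _ (List.get_mem l i)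
    · intro i j hij
      exact (List.pairwise_iff_get.mp hpw) i j hij
  have hval : val x l = ∑ i : Fin l.length,
      (∑ k ∈ Finset.Icc (l.get i).1 (l.get i).2, x k) ^ 2 := by
    simpa [val] using sum_map_get (fun p : ℕ × ℕ => (∑ k ∈ Finset.Icc p.1 p.2, x k) ^ 2) l
  have hmem : Real.sqrt (val x l) ∈ estimates x := by
    exact ⟨l.length, l.get, hvadm, by rw [hval]⟩
  have h1 : Real.sqrt (val x l) ≤ jamesNorm x := le_csSup hx hmem
  have h2 : Real.sqrt (val x l) ^ 2 = val x l := Real.sq_sqrt (val_nonneg l)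
  calc val x l = Real.sqrt (val x l) ^ 2 := h2.symm
    _ ≤ jamesNorm x ^ 2 := by
        have := Real.sqrt_nonneg (val x l)
        nlinarith [jamesNorm_nonneg hx]

/-- Families of intervals contained in `[0, c)`. -/
def fam2 (x : ℕ → ℝ) (c : ℕ) : Set ℝ :=
  {v | ∃ l : List (ℕ × ℕ), l.Pairwise (fun p q => p.2 < q.1) ∧
    (∀ p ∈ l, p.1 ≤ p.2 ∧ p.2 < c) ∧ v = val x l}

/-- Restricted optimal value. -/
def M (x : ℕ → ℝ) (c : ℕ) : ℝ := sSup (fam2 x c)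

lemma zero_mem_fam2 (c : ℕ) : (0 : ℝ) ∈ fam2 x c :=
  ⟨[], List.Pairwise.nil, by simp, rfl⟩

lemma fam2_nonempty (c : ℕ) : (fam2 x c).Nonempty := ⟨0, zero_mem_fam2 c⟩

lemma fam2_le (hx : MemJ x) {c : ℕ} {v : ℝ} (hv : v ∈ fam2 x c) :
    v ≤ jamesNorm x ^ 2 := by
  obtain ⟨l, hpw, hm, rfl⟩ := hv
  exact val_le hx l hpw (fun p hp => (hm p hp).1)

lemma fam2_bddAbove (hx : MemJ x) (c : ℕ) : BddAbove (fam2 x c) :=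
  ⟨jamesNorm x ^ 2, fun v hv => fam2_le hx hv⟩

lemma M_le_norm (hx : MemJ x) (c : ℕ) : M x c ≤ jamesNorm x ^ 2 :=
  csSup_le (fam2_nonempty c) (fun v hv => fam2_le hx hv)

lemma M_nonneg (hx : MemJ x) (c : ℕ) : 0 ≤ M x c :=
  le_csSup (fam2_bddAbove hx c) (zero_mem_fam2 c)

lemma fam2_mono {c c' : ℕ} (h : c ≤ c') : fam2 x c ⊆ fam2 x c' := by
  rintro v ⟨l, hpw, hm, rfl⟩
  exact ⟨l, hpw, fun p hp => ⟨(hm p hp).1, lt_of_lt_of_le (hm p hp).2 h⟩, rfl⟩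

lemma M_mono (hx : MemJ x) {c c' : ℕ} (h : c ≤ c') : M x c ≤ M x c' :=
  csSup_le_csSup (fam2_bddAbove hx c') (fam2_nonempty c) (fam2_mono h)

lemma fam2_snoc {c a b : ℕ} {v : ℝ} (hv : v ∈ fam2 x c) (hca : c ≤ a) (hab : a ≤ b) :
    v + (∑ k ∈ Finset.Icc a b, x k) ^ 2 ∈ fam2 x (b + 1) := by
  obtain ⟨l, hpw, hm, rfl⟩ := hv
  refine ⟨l ++ [(a, b)], ?_, ?_, ?_⟩
  · rw [List.pairwise_append]
    exact ⟨hpw, List.pairwise_singleton _ _, by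
      intro p hp q hq
      rw [List.mem_singleton] at hq
      subst hq
      exact lt_of_lt_of_le (hm p hp).2 hca⟩
  · intro p hp
    rcases List.mem_append.mp hp with h | h
    · exact ⟨(hm p h).1, by have := (hm p h).2; omega⟩
    · rw [List.mem_singleton] at h; subst h
      exact ⟨hab, Nat.lt_succ_self b⟩
  · rw [val_append, val_singleton]

/-- The fundamental single-interval step inequality. -/
lemma Mstep (hx : MemJ x) {t₁ t₂ : ℕ} (h : t₁ ≤ t₂) :
    M x t₁ + (∑ k ∈ Finset.Ico t₁ t₂, x k) ^ 2 ≤ M x t₂ := by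
  rcases eq_or_lt_of_le h with rfl | hlt
  · simp [M_mono hx (le_refl t₁)]
  · have key : ∀ v ∈ fam2 x t₁,
        v + (∑ k ∈ Finset.Ico t₁ t₂, x k) ^ 2 ≤ M x t₂ := by
      intro v hv
      have h1 : t₂ - 1 + 1 = t₂ := by omega
      have hIcc : Finset.Icc t₁ (t₂ - 1) = Finset.Ico t₁ t₂ := by
        rw [← Finset.Ico_add_one_right_eq_Icc, show t₂ - 1 + 1 = t₂ by omega]
      have := fam2_snoc hv (le_refl t₁) (by omega : t₁ ≤ t₂ - 1)
      rw [hIcc, h1] at this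
      exact le_csSup (fam2_bddAbove hx t₂) this
    have : M x t₁ ≤ M x t₂ - (∑ k ∈ Finset.Ico t₁ t₂, x k) ^ 2 := by
      apply csSup_le (fam2_nonempty t₁)
      intro v hv
      linarith [key v hv]
    linarith

/-- ∞-version of the step inequality. -/
lemma Mstep_lim (hx : MemJ x) {t : ℕ} {l : ℝ}
    (hl : Tendsto (fun T => ∑ k ∈ Finset.Ico t T, x k) atTop (𝓝 l)) :
    M x t + l ^ 2 ≤ jamesNorm x ^ 2 := by
  have key : ∀ v ∈ fam2 x t, v + l ^ 2 ≤ jamesNorm x ^ 2 := by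
    intro v hv
    have hten : Tendsto (fun T => v + (∑ k ∈ Finset.Ico t T, x k) ^ 2) atTop
        (𝓝 (v + l ^ 2)) := tendsto_const_nhds.add (hl.pow 2)
    apply le_of_tendsto hten
    filter_upwards [eventually_ge_atTop (t + 1)] with T hT
    have hIcc : Finset.Icc t (T - 1) = Finset.Ico t T := by
      rw [← Finset.Ico_add_one_right_eq_Icc, show T - 1 + 1 = T by omega]
    have := fam2_snoc hv (le_refl t) (by omega : t ≤ T - 1)
    rw [hIcc] at this
    exact fam2_le hx this
  have : M x t ≤ jamesNorm x ^ 2 - l ^ 2 := by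
    apply csSup_le (fam2_nonempty t)
    intro v hv
    linarith [key v hv]
  linarith

/-! ## Partition infrastructure -/

section PartitionLemmas

variable (B : NormingPartition x)

/-- least element of a block -/
def mn (B : NormingPartition x) (r : ℕ) : ℕ := sInf (B.I r)

/-- greatest element of a (bounded) block -/
def mx (B : NormingPartition x) (r : ℕ) : ℕ := sSup (B.I r)

/-- squared block sums -/
def g (B : NormingPartition x) (r : ℕ) : ℝ :=
  if r ∈ B.F then (setSum x (B.I r)) ^ 2 else 0

/-- head sums -/
def Hh (B : NormingPartition x) (n : ℕ) : ℝ := ∑ r ∈ Finset.range n, g B r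

/-- tail sums -/
def Tt (B : NormingPartition x) (n : ℕ) : ℝ := ∑' r, g B (r + n)

variable {B}

lemma g_nonneg (r : ℕ) : 0 ≤ g B r := by
  rw [g]; split <;> positivity

lemma mem_mn {r : ℕ} (hr : r ∈ B.F) : mn B r ∈ B.I r :=
  Nat.sInf_mem (B.I_nonempty r hr)

lemma mn_le {r k : ℕ} (hk : k ∈ B.I r) : mn B r ≤ k := Nat.sInf_le hk

lemma lt_blocks {r r' a b : ℕ} (hr : r ∈ B.F) (hr' : r' ∈ B.F) (h : r < r')
    (ha : a ∈ B.I r) (hb : b ∈ B.I r') : a < b :=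
  B.ordered r hr r' hr' h a ha b hb

lemma bdd_of_lt {r r' : ℕ} (hr : r ∈ B.F) (hr' : r' ∈ B.F) (h : r < r') :
    BddAbove (B.I r) := by
  obtain ⟨b, hb⟩ := B.I_nonempty r' hr'
  exact ⟨b, fun a ha => (lt_blocks hr hr' h ha hb).le⟩

lemma mem_mx {r : ℕ} (hr : r ∈ B.F) (hb : BddAbove (B.I r)) : mx B r ∈ B.I r :=
  Nat.sSup_mem (B.I_nonempty r hr) hb

lemma le_mx {r k : ℕ} (hb : BddAbove (B.I r)) (hk : k ∈ B.I r) : k ≤ mx B r :=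
  le_csSup hb hk

lemma mem_of_between {r a b k : ℕ} (hr : r ∈ B.F) (ha : a ∈ B.I r) (hb : b ∈ B.I r)
    (h1 : a ≤ k) (h2 : k ≤ b) : k ∈ B.I r :=
  (B.I_interval r hr).out ha hb ⟨h1, h2⟩

lemma unbounded_mem {r k : ℕ} (hr : r ∈ B.F) (hnb : ¬ BddAbove (B.I r))
    (hk : mn B r ≤ k) : k ∈ B.I r := by
  obtain ⟨b, hbI, hkb⟩ := not_bddAbove_iff.mp hnb k
  exact mem_of_between hr (mem_mn hr) hbI hk hkb.le

lemma no_after_unbounded {r r' : ℕ} (hr : r ∈ B.F) (hnb : ¬ BddAbove (B.I r))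
    (hr' : r' ∈ B.F) (h : r < r') : False := by
  obtain ⟨b, hb⟩ := B.I_nonempty r' hr'
  have h1 : b ∈ B.I r :=
    unbounded_mem hr hnb (lt_blocks hr hr' h (mem_mn hr) hb).le
  exact lt_irrefl b (lt_blocks hr hr' h h1 hb)

lemma mem_iff_of_bdd {r : ℕ} (hr : r ∈ B.F) (hb : BddAbove (B.I r)) (k : ℕ) :
    k ∈ B.I r ↔ mn B r ≤ k ∧ k ≤ mx B r :=
  ⟨fun h => ⟨mn_le h, le_mx hb h⟩,
   fun ⟨h1, h2⟩ => mem_of_between hr (mem_mn hr) (mem_mx hr hb) h1 h2⟩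

lemma setSum_eq {r : ℕ} (hr : r ∈ B.F) (hb : BddAbove (B.I r)) :
    setSum x (B.I r) = ∑ k ∈ Finset.Ico (mn B r) (mx B r + 1), x k := by
  apply Filter.Tendsto.limUnder_eq
  apply tendsto_atTop_of_eventually_const (i₀ := mx B r + 1)
  intro T hT
  rw [← Finset.sum_filter]
  congr 1
  ext k
  simp only [Finset.mem_filter, Finset.mem_range, Finset.mem_Ico,
    mem_iff_of_bdd hr hb k]
  omega

lemma g_eq {r : ℕ} (hr : r ∈ B.F) (hb : BddAbove (B.I r)) :
    g B r = (∑ k ∈ Finset.Ico (mn B r) (mx B r + 1), x k) ^ 2 := by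
  rw [g, if_pos hr, setSum_eq hr hb]

lemma partial_tendsto {r : ℕ} (hr : r ∈ B.F) (hnb : ¬ BddAbove (B.I r)) :
    Tendsto (fun T => ∑ k ∈ Finset.Ico (mn B r) T, x k) atTop
      (𝓝 (setSum x (B.I r))) := by
  obtain ⟨l, hl⟩ := B.sums_exist r hr
  have heq : ∀ T : ℕ, (∑ k ∈ Finset.range T, if k ∈ B.I r then x k else 0)
      = ∑ k ∈ Finset.Ico (mn B r) T, x k := by
    intro T
    rw [← Finset.sum_filter]
    congr 1
    ext k
    simp only [Finset.mem_filter, Finset.mem_range, Finset.mem_Ico]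
    constructor
    · rintro ⟨h1, h2⟩; exact ⟨mn_le h2, h1⟩
    · rintro ⟨h1, h2⟩; exact ⟨h2, unbounded_mem hr hnb h1⟩
  have hss : setSum x (B.I r) = l := Filter.Tendsto.limUnder_eq hl
  rw [hss]
  have := hl
  simp only [heq] at this
  exact this

/-- Central list-building induction. -/
lemma listBuild {l₀ : List (ℕ × ℕ)} {n₀ : ℕ}
    (hpw : l₀.Pairwise (fun p q => p.2 < q.1)) (hle : ∀ p ∈ l₀, p.1 ≤ p.2)
    (hsep : ∀ p ∈ l₀, ∀ r, r ∈ B.F → n₀ ≤ r → ∀ k ∈ B.I r, p.2 < k) :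
    ∀ n, n₀ ≤ n → (∀ r, r ∈ B.F → n₀ ≤ r → r < n → BddAbove (B.I r)) →
    ∃ l : List (ℕ × ℕ), l.Pairwise (fun p q => p.2 < q.1) ∧ (∀ p ∈ l, p.1 ≤ p.2) ∧
      (∀ p ∈ l, ∀ r, r ∈ B.F → n ≤ r → ∀ k ∈ B.I r, p.2 < k) ∧
      val x l = val x l₀ + ∑ r ∈ Finset.Ico n₀ n, g B r := by
  intro n hn
  induction n, hn using Nat.le_induction with
  | base =>
      intro _
      exact ⟨l₀, hpw, hle, fun p hp r hrF hnr k hk => hsep p hp r hrF hnr k hk,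
        by simp⟩
  | succ n hn ih =>
      intro hbdd
      obtain ⟨l, hpw', hle', hsep', hval⟩ := ih (fun r h1 h2 h3 => hbdd r h1 h2 (by omega))
      by_cases hnF : n ∈ B.F
      · have hbn : BddAbove (B.I n) := hbdd n hnF hn (by omega)
        refine ⟨l ++ [(mn B n, mx B n)], ?_, ?_, ?_, ?_⟩
        · rw [List.pairwise_append]
          refine ⟨hpw', List.pairwise_singleton _ _, ?_⟩
          intro p hp q hq
          rw [List.mem_singleton] at hq; subst hq
          exact hsep' p hp n hnF (le_refl n) _ (mem_mn hnF)
        · intro p hp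
          rcases List.mem_append.mp hp with h | h
          · exact hle' p h
          · rw [List.mem_singleton] at h; subst h
            exact mn_le (mem_mx hnF hbn)
        · intro p hp r hrF hnr k hk
          rcases List.mem_append.mp hp with h | h
          · exact hsep' p h r hrF (by omega) k hk
          · rw [List.mem_singleton] at h; subst h
            exact lt_blocks hnF hrF (by omega) (mem_mx hnF hbn) hk
        · rw [val_append, val_singleton, hval, Finset.sum_Ico_succ_top hn,
            g_eq hnF hbn, show Finset.Icc (mn B n) (mx B n)
              = Finset.Ico (mn B n) (mx B n + 1) from (Finset.Ico_add_one_right_eq_Icc _ _).symm]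
          ring
      · refine ⟨l, hpw', hle', ?_, ?_⟩
        · intro p hp r hrF hnr k hk
          exact hsep' p hp r hrF (by omega) k hk
        · rw [hval, Finset.sum_Ico_succ_top hn, g, if_neg hnF, add_zero]

/-- mixed family bound, including possibly one unbounded final block -/
lemma val_add_sum_le (hx : MemJ x) {l₀ : List (ℕ × ℕ)} {n₀ : ℕ}
    (hpw : l₀.Pairwise (fun p q => p.2 < q.1)) (hle : ∀ p ∈ l₀, p.1 ≤ p.2)
    (hsep : ∀ p ∈ l₀, ∀ r, r ∈ B.F → n₀ ≤ r → ∀ k ∈ B.I r, p.2 < k) :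
    ∀ n, val x l₀ + ∑ r ∈ Finset.Ico n₀ n, g B r ≤ jamesNorm x ^ 2 := by
  intro n
  rcases le_or_gt n n₀ with h | h
  · rw [Finset.Ico_eq_empty (by omega), Finset.sum_empty, add_zero]
    exact val_le hx l₀ hpw hle
  by_cases hall : ∀ r, r ∈ B.F → n₀ ≤ r → r < n → BddAbove (B.I r)
  · obtain ⟨l, hpw', hle', _, hval⟩ := listBuild hpw hle hsep n h.le hall
    rw [← hval]
    exact val_le hx l hpw' hle'
  · push_neg at hall
    obtain ⟨rf, hrfF, hn₀rf, hrfn, hnb⟩ := hall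
    have hnoafter : ∀ r', r' ∈ B.F → ¬ rf < r' := fun r' h1 h2 =>
      no_after_unbounded hrfF hnb h1 h2
    have hsum : ∑ r ∈ Finset.Ico n₀ n, g B r
        = ∑ r ∈ Finset.Ico n₀ rf, g B r + g B rf := by
      rw [← Finset.sum_Ico_consecutive _ hn₀rf (le_of_lt hrfn)]
      congr 1
      rw [Finset.sum_eq_sum_Ico_succ_bot hrfn]
      have : ∑ r ∈ Finset.Ico (rf + 1) n, g B r = 0 := by
        apply Finset.sum_eq_zero
        intro r hr
        rw [Finset.mem_Ico] at hr
        rw [g, if_neg]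
        intro hrF
        exact hnoafter r hrF (by omega)
      rw [this, add_zero]
    obtain ⟨l, hpw', hle', hsep', hval⟩ := listBuild hpw hle hsep rf hn₀rf
      (fun r h1 h2 h3 => bdd_of_lt h1 hrfF h3)
    have hbound : ∀ T, mn B rf + 1 ≤ T →
        val x l + (∑ k ∈ Finset.Ico (mn B rf) T, x k) ^ 2 ≤ jamesNorm x ^ 2 := by
      intro T hT
      have hIcc : Finset.Icc (mn B rf) (T - 1) = Finset.Ico (mn B rf) T := by
        rw [← Finset.Ico_add_one_right_eq_Icc, show T - 1 + 1 = T by omega]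
      have hval2 : val x (l ++ [(mn B rf, T - 1)])
          = val x l + (∑ k ∈ Finset.Ico (mn B rf) T, x k) ^ 2 := by
        rw [val_append, val_singleton, hIcc]
      rw [← hval2]
      apply val_le hx
      · rw [List.pairwise_append]
        refine ⟨hpw', List.pairwise_singleton _ _, ?_⟩
        intro p hp q hq
        rw [List.mem_singleton] at hq; subst hq
        exact hsep' p hp rf hrfF (le_refl rf) _ (mem_mn hrfF)
      · intro p hp
        rcases List.mem_append.mp hp with hmem | hmem
        · exact hle' p hmem
        · rw [List.mem_singleton] at hmem; subst hmem
          exact (by omega : mn B rf ≤ T - 1)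
    have hten := partial_tendsto hrfF hnb
    have hfin : val x l + (setSum x (B.I rf)) ^ 2 ≤ jamesNorm x ^ 2 := by
      apply le_of_tendsto (tendsto_const_nhds.add (hten.pow 2))
      filter_upwards [eventually_ge_atTop (mn B rf + 1)] with T hT
      exact hbound T hT
    have hg : g B rf = (setSum x (B.I rf)) ^ 2 := by rw [g, if_pos hrfF]
    rw [hsum, hg, ← add_assoc, ← hval]
    exact hfin


lemma sum_g_le (hx : MemJ x) : ∀ n, ∑ r ∈ Finset.range n, g B r ≤ jamesNorm x ^ 2 := by
  intro n
  have := val_add_sum_le (B := B) hx (l₀ := []) (n₀ := 0) List.Pairwise.nil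
    (by simp) (by simp) n
  rw [val_nil, zero_add, ← Finset.range_eq_Ico] at this
  exact this

lemma summable_g' (hx : MemJ x) : Summable (g B) :=
  summable_of_sum_range_le g_nonneg (sum_g_le hx)

lemma tsum_g : ∑' r, g B r = jamesNorm x ^ 2 := by
  have h := B.norming
  rw [← h, tsum_subtype B.F (fun r => (setSum x (B.I r)) ^ 2)]
  apply tsum_congr
  intro r
  rw [Set.indicator_apply, g]

lemma Hh_add_Tt (hx : MemJ x) (n : ℕ) : Hh B n + Tt B n = jamesNorm x ^ 2 := by
  rw [Hh, Tt, Summable.sum_add_tsum_nat_add n (summable_g' hx), tsum_g]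

lemma Tt_nonneg : 0 ≤ Tt B n := tsum_nonneg (fun r => g_nonneg _)

lemma M_le_head (hx : MemJ x) {j : ℕ} (hj : j ∈ B.F) {c : ℕ} (hc : c ≤ mn B j) :
    M x c ≤ Hh B j := by
  apply csSup_le (fam2_nonempty c)
  rintro v ⟨l₀, hpw, hm, rfl⟩
  have hsep : ∀ p ∈ l₀, ∀ r, r ∈ B.F → j ≤ r → ∀ k ∈ B.I r, p.2 < k := by
    intro p hp r hrF hjr k hk
    have h1 : p.2 < c := (hm p hp).2
    have h2 : mn B j ≤ k := by
      rcases eq_or_lt_of_le hjr with rfl | hlt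
      · exact mn_le hk
      · exact (lt_blocks hj hrF hlt (mem_mn hj) hk).le
    omega
  have hTt : ∀ nn : ℕ, ∑ i ∈ Finset.range nn, g B (i + j) ≤ jamesNorm x ^ 2 - val x l₀ := by
    intro nn
    have h1 : ∑ i ∈ Finset.range nn, g B (i + j) = ∑ r ∈ Finset.Ico j (j + nn), g B r := by
      rw [Finset.sum_Ico_eq_sum_range]
      simp [add_comm, Nat.add_sub_cancel_left]
    have h2 := val_add_sum_le (B := B) hx hpw (fun p hp => (hm p hp).1) hsep (j + nn)
    rw [h1]; linarith
  have hsumm : Summable (fun i => g B (i + j)) :=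
    (summable_nat_add_iff j).mpr (summable_g' hx)
  have hTt2 : Tt B j ≤ jamesNorm x ^ 2 - val x l₀ :=
    Summable.tsum_le_of_sum_range_le hsumm hTt
  have := Hh_add_Tt (B := B) hx j
  linarith

lemma head_le_M (hx : MemJ x) {j : ℕ} (hj : j ∈ B.F) : Hh B j ≤ M x (mn B j) := by
  obtain ⟨l, hpw, hle, hsep, hval⟩ := listBuild (B := B) (l₀ := []) (n₀ := 0)
    List.Pairwise.nil (by simp) (by simp) j (Nat.zero_le j)
    (fun r h1 _ h3 => bdd_of_lt h1 hj h3)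
  apply le_csSup (fam2_bddAbove hx _)
  refine ⟨l, hpw, ?_, ?_⟩
  · intro p hp
    exact ⟨hle p hp, hsep p hp j hj (le_refl j) _ (mem_mn hj)⟩
  · rw [hval, val_nil, zero_add, Hh, Finset.range_eq_Ico]

lemma M_eq_head (hx : MemJ x) {j : ℕ} (hj : j ∈ B.F) : M x (mn B j) = Hh B j :=
  le_antisymm (M_le_head hx hj (le_refl _)) (head_le_M hx hj)

end PartitionLemmas

section Endgame
variable {x : ℕ → ℝ}

/-! ## The crossing contradiction -/

lemma gap_zero {r k : ℕ} {B : NormingPartition x} (hr : r ∈ B.F) (hr1 : r + 1 ∈ B.F)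
    (hb : BddAbove (B.I r)) (h1 : mx B r < k) (h2 : k < mn B (r + 1)) : x k = 0 := by
  by_contra hk
  obtain ⟨r', hr'F, hkr'⟩ := Set.mem_iUnion₂.mp (B.covers hk)
  rcases lt_trichotomy r' r with h | h | h
  · have := lt_blocks hr'F hr h hkr' (mem_mx hr hb); omega
  · subst h; have := le_mx hb hkr'; omega
  · rcases eq_or_lt_of_le (show r + 1 ≤ r' by omega) with h' | h'
    · rw [← h'] at hkr'; have := mn_le hkr'; omega
    · have := lt_blocks hr1 hr'F h' (mem_mn hr1) hkr'; omega

/-- The crossing configuration: the block `I i` of `A` starts strictly before the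
block `I j` of `B`, contains its minimum, and `I j` has an element outside `I i`. -/
def Cross (A B : NormingPartition x) (i j : ℕ) : Prop :=
  i ∈ A.F ∧ j ∈ B.F ∧ mn A i < mn B j ∧ mn B j ∈ A.I i ∧ ∃ z ∈ B.I j, z ∉ A.I i

set_option maxHeartbeats 2000000 in
lemma no_cross (hx : MemJ x) (A B : NormingPartition x) (i j : ℕ)
    (hc : Cross A B i j)
    (hmin : ∀ (A' B' : NormingPartition x) (i' j' : ℕ),
      Cross A' B' i' j' → mn B j ≤ mn B' j') : False := by
  obtain ⟨hi, hj, hμm, hmI, z, hzL, hzI⟩ := hc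
  have hbddA : BddAbove (A.I i) := by
    by_contra hnb
    exact hzI (unbounded_mem (B := A) hi hnb (le_trans hμm.le (mn_le hzL)))
  have hmqA : mn B j ≤ mx A i := le_mx hbddA hmI
  have hzqA : mx A i < z := by
    by_contra h
    push_neg at h
    exact hzI (mem_of_between hi (mem_mn hi) (mem_mx hi hbddA)
      (le_trans hμm.le (mn_le hzL)) h)
  have hμqA : mn A i ≤ mx A i := mn_le (mem_mx hi hbddA)
  -- support values at the minima
  have hd1 : x (mn A i) ≠ 0 := by
    obtain ⟨m', ⟨hm'I, hm's⟩, hmin'⟩ := A.min_in_supp i hi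
    have : m' = mn A i := le_antisymm (hmin' _ (mem_mn hi)) (mn_le hm'I)
    rwa [← this]
  have he : x (mn B j) ≠ 0 := by
    obtain ⟨m', ⟨hm'I, hm's⟩, hmin'⟩ := B.min_in_supp j hj
    have : m' = mn B j := le_antisymm (hmin' _ (mem_mn hj)) (mn_le hm'I)
    rwa [← this]
  -- `i` is not the final block
  have hi1 : i + 1 ∈ A.F := by
    obtain ⟨m₀, hm₀s, hzm₀⟩ := B.bounded_by_supp j hj z hzL
    obtain ⟨r, hrF, hm₀r⟩ := Set.mem_iUnion₂.mp (A.covers hm₀s)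
    have hir : i < r := by
      rcases lt_trichotomy r i with h | h | h
      · have := lt_blocks hrF hi h hm₀r (mem_mn hi); omega
      · subst h; have := le_mx hbddA hm₀r; omega
      · exact h
    exact A.initial (by omega : i + 1 ≤ r) hrF
  -- block of B containing mn A i
  obtain ⟨j₁, hj₁F, hμj₁⟩ := Set.mem_iUnion₂.mp (B.covers hd1)
  have hj₁j : j₁ < j := by
    rcases lt_trichotomy j₁ j with h | h | h
    · exact h
    · subst h; have := mn_le hμj₁; omega
    · have := lt_blocks hj hj₁F h (mem_mn hj) hμj₁; omega
  have hmnj₁ : mn B j₁ = mn A i := by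
    have hle' : mn B j₁ ≤ mn A i := mn_le hμj₁
    rcases eq_or_lt_of_le hle' with h | h
    · exact h
    · exfalso
      have hcr : Cross B A j₁ i := by
        refine ⟨hj₁F, hi, h, hμj₁, ⟨mn B j, hmI, ?_⟩⟩
        intro hmem
        exact lt_irrefl _ (lt_blocks hj₁F hj hj₁j hmem (mem_mn hj))
      have := hmin B A j₁ i hcr
      omega
  have hbddj₁ : BddAbove (B.I j₁) := bdd_of_lt hj₁F hj hj₁j
  have hj₁1F : j₁ + 1 ∈ B.F := B.initial (by omega : j₁ + 1 ≤ j) hj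
  have hμc1 : mn A i ≤ mx B j₁ := by
    rw [← hmnj₁]; exact mn_le (mem_mx hj₁F hbddj₁)
  have hc1m : mx B j₁ < mn B j := lt_blocks hj₁F hj hj₁j (mem_mx hj₁F hbddj₁) (mem_mn hj)
  have hc1mn : mx B j₁ < mn B (j₁ + 1) :=
    lt_blocks hj₁F hj₁1F (by omega) (mem_mx hj₁F hbddj₁) (mem_mn hj₁1F)
  -- the first support point of B's block beyond mx A i
  have hZne : {k : ℕ | x k ≠ 0 ∧ mx A i < k ∧ k ∈ B.I j}.Nonempty := by
    by_cases hbddL : BddAbove (B.I j)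
    · by_cases hjNF : ∃ r ∈ B.F, j < r
      · obtain ⟨mm, ⟨hmmL, hmms⟩, hmax⟩ := B.max_in_supp j hj hjNF
        exact ⟨mm, hmms, by have := hmax z hzL; omega, hmmL⟩
      · obtain ⟨m₁, hm₁s, hqBm₁⟩ := B.bounded_by_supp j hj (mx B j) (mem_mx hj hbddL)
        obtain ⟨r, hrF, hm₁r⟩ := Set.mem_iUnion₂.mp (B.covers hm₁s)
        have hrj : r = j := by
          rcases lt_trichotomy r j with h | h | h
          · have h1 := lt_blocks hrF hj h hm₁r (mem_mn hj)
            have h2 : mn B j ≤ mx B j := mn_le (mem_mx hj hbddL)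
            omega
          · exact h
          · exact absurd ⟨r, hrF, h⟩ hjNF
        rw [hrj] at hm₁r
        have hm₁qB : m₁ = mx B j := le_antisymm (le_mx hbddL hm₁r) hqBm₁
        refine ⟨mx B j, by rwa [← hm₁qB], ?_, mem_mx hj hbddL⟩
        have := le_mx hbddL hzL; omega
    · obtain ⟨m₁, hm₁s, hzm₁⟩ := B.bounded_by_supp j hj z hzL
      obtain ⟨r, hrF, hm₁r⟩ := Set.mem_iUnion₂.mp (B.covers hm₁s)
      have hrj : r = j := by
        rcases lt_trichotomy r j with h | h | h
        · have h1 := lt_blocks hrF hj h hm₁r (mem_mn hj)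
          have h2 : mn B j ≤ z := mn_le hzL
          omega
        · exact h
        · exact (no_after_unbounded hj hbddL hrF h).elim
      rw [hrj] at hm₁r
      exact ⟨m₁, hm₁s, by omega, hm₁r⟩
  obtain ⟨z₁, ⟨hd2, hqAz₁, hz₁L⟩, hz₁min⟩ :
      ∃ z₁, (x z₁ ≠ 0 ∧ mx A i < z₁ ∧ z₁ ∈ B.I j) ∧
        ∀ k, (x k ≠ 0 ∧ mx A i < k ∧ k ∈ B.I j) → z₁ ≤ k :=
    ⟨sInf _, Nat.sInf_mem hZne, fun k hk => Nat.sInf_le hk⟩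
  have hgapz : ∀ k, mx A i < k → k < z₁ → x k = 0 := by
    intro k h1 h2
    by_contra hk0
    have hkL : k ∈ B.I j := mem_of_between hj (mem_mn hj) hz₁L (by omega) (by omega)
    have := hz₁min k ⟨hk0, h1, hkL⟩
    omega
  have hgapB1 : ∀ k, mx B j₁ < k → k < mn B (j₁ + 1) → x k = 0 := by
    intro k h1 h2
    exact gap_zero hj₁F hj₁1F hbddj₁ h1 h2
  have hqAmn1 : mx A i < mn A (i + 1) :=
    lt_blocks hi hi1 (by omega) (mem_mx hi hbddA) (mem_mn hi1)
  -- the real quantities, as opaque variables with defining equations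
  obtain ⟨U, hU⟩ : ∃ U, U = ∑ k ∈ Finset.Ico (mn A i) (mn B j), x k := ⟨_, rfl⟩
  obtain ⟨V, hV⟩ : ∃ V, V = ∑ k ∈ Finset.Ico (mn B j) (mx A i + 1), x k := ⟨_, rfl⟩
  obtain ⟨u1, hu1⟩ : ∃ u1, u1 = ∑ k ∈ Finset.Ico (mn A i) (mx B j₁ + 1), x k := ⟨_, rfl⟩
  obtain ⟨Δ, hΔ⟩ : ∃ Δ, Δ = M x (mn B j) - M x (mn A i) := ⟨_, rfl⟩
  -- head identities
  have F1 : M x (mn A i) = Hh A i := M_eq_head hx hi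
  have F2 : M x (mn A i) = Hh B j₁ := by rw [← hmnj₁]; exact M_eq_head hx hj₁F
  have F3 : M x (mn B j) = Hh B j := M_eq_head hx hj
  have hgAi : g A i = (U + V) ^ 2 := by
    rw [g_eq hi hbddA,
      ← Finset.sum_Ico_consecutive x hμm.le (by omega : mn B j ≤ mx A i + 1), ← hU, ← hV]
  have hgBj₁ : g B j₁ = u1 ^ 2 := by
    rw [g_eq hj₁F hbddj₁, hmnj₁, ← hu1]
  -- E5 : u1 ^ 2 ≤ Δ
  have E5 : u1 ^ 2 ≤ Δ := by
    have hsplit : Hh B j = Hh B j₁ + ∑ r ∈ Finset.Ico j₁ j, g B r := by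
      rw [Hh, Hh, Finset.range_eq_Ico,
        ← Finset.sum_Ico_consecutive (g B) (Nat.zero_le j₁) hj₁j.le, Finset.range_eq_Ico]
    have h2 : g B j₁ ≤ ∑ r ∈ Finset.Ico j₁ j, g B r :=
      Finset.single_le_sum (fun r _ => g_nonneg r)
        (Finset.mem_Ico.mpr ⟨le_refl _, hj₁j⟩)
    rw [hΔ, F3, F2, hsplit]
    linarith [hgBj₁]
  -- E1 : U ^ 2 ≤ Δ
  have E1 : U ^ 2 ≤ Δ := by
    have := Mstep hx (hμm.le : mn A i ≤ mn B j)
    rw [← hU] at this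
    rw [hΔ]; linarith
  -- M (mx A i + 1) bounds
  have hMqA_up : M x (mx A i + 1) ≤ M x (mn A i) + (U + V) ^ 2 := by
    have h2 : M x (mx A i + 1) ≤ Hh A (i + 1) :=
      M_le_head hx hi1 (by omega : mx A i + 1 ≤ mn A (i + 1))
    have h3 : Hh A (i + 1) = Hh A i + g A i := Finset.sum_range_succ _ _
    rw [F1]; rw [hgAi] at h3; linarith
  have hMqA_lo : M x (mn A i) + (U + V) ^ 2 ≤ M x (mx A i + 1) := by
    have := Mstep hx (by omega : mn A i ≤ mx A i + 1)
    rw [← Finset.sum_Ico_consecutive x hμm.le (by omega : mn B j ≤ mx A i + 1),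
      ← hU, ← hV] at this
    exact this
  -- E2 : Δ + V ^ 2 ≤ (U + V) ^ 2
  have E2 : Δ + V ^ 2 ≤ (U + V) ^ 2 := by
    have h1 := Mstep hx (by omega : mn B j ≤ mx A i + 1)
    rw [← hV] at h1
    rw [hΔ]; linarith
  -- E3 : Δ + e ^ 2 + (V - e) ^ 2 ≤ (U + V) ^ 2 with e = x (mn B j)
  have hVsplit : V = x (mn B j) + ∑ k ∈ Finset.Ico (mn B j + 1) (mx A i + 1), x k := by
    rw [hV]; exact Finset.sum_eq_sum_Ico_succ_bot (by omega) x
  have E3 : Δ + (x (mn B j)) ^ 2 + (V - x (mn B j)) ^ 2 ≤ (U + V) ^ 2 := by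
    have h1 := Mstep hx (by omega : mn B j ≤ mn B j + 1)
    have h1' : ∑ k ∈ Finset.Ico (mn B j) (mn B j + 1), x k = x (mn B j) := by
      rw [Finset.sum_Ico_succ_top (le_refl _), Finset.Ico_self, Finset.sum_empty, zero_add]
    rw [h1'] at h1
    have h2 := Mstep hx (by omega : mn B j + 1 ≤ mx A i + 1)
    have h2' : ∑ k ∈ Finset.Ico (mn B j + 1) (mx A i + 1), x k = V - x (mn B j) := by
      rw [hVsplit]; ring
    rw [h2'] at h2
    rw [hΔ]; linarith
  -- E4 : d1 ^ 2 + (u1 - d1) ^ 2 ≤ u1 ^ 2 with d1 = x (mn A i)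
  have E4 : (x (mn A i)) ^ 2 + (u1 - x (mn A i)) ^ 2 ≤ u1 ^ 2 := by
    have h1 := Mstep hx (by omega : mn A i ≤ mn A i + 1)
    have h1' : ∑ k ∈ Finset.Ico (mn A i) (mn A i + 1), x k = x (mn A i) := by
      rw [Finset.sum_Ico_succ_top (le_refl _), Finset.Ico_self, Finset.sum_empty, zero_add]
    rw [h1'] at h1
    have h2 := Mstep hx (by omega : mn A i + 1 ≤ mn B (j₁ + 1))
    have h2' : ∑ k ∈ Finset.Ico (mn A i + 1) (mn B (j₁ + 1)), x k = u1 - x (mn A i) := by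
      rw [← Finset.sum_Ico_consecutive x (by omega : mn A i + 1 ≤ mx B j₁ + 1)
        (by omega : mx B j₁ + 1 ≤ mn B (j₁ + 1))]
      have hz0 : ∑ k ∈ Finset.Ico (mx B j₁ + 1) (mn B (j₁ + 1)), x k = 0 := by
        apply Finset.sum_eq_zero
        intro k hk
        rw [Finset.mem_Ico] at hk
        exact hgapB1 k (by omega) (by omega)
      have hsp : u1 = x (mn A i) + ∑ k ∈ Finset.Ico (mn A i + 1) (mx B j₁ + 1), x k := by
        rw [hu1]; exact Finset.sum_eq_sum_Ico_succ_bot (by omega) x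
      rw [hz0, add_zero]; linarith
    rw [h2'] at h2
    have h3 : M x (mn B (j₁ + 1)) = Hh B (j₁ + 1) := M_eq_head hx hj₁1F
    have h4 : Hh B (j₁ + 1) = Hh B j₁ + g B j₁ := Finset.sum_range_succ _ _
    rw [h3, h4, ← F2, hgBj₁] at h2
    linarith
  -- E6, E7, E8 (two cases: final block of B bounded or not)
  obtain ⟨W, W2, hWsplit, E8, E6, E7⟩ :
      ∃ W W2 : ℝ, W = x z₁ + W2 ∧
        ((U + V) ^ 2 + (x z₁) ^ 2 + W2 ^ 2 ≤ Δ + (V + W) ^ 2) ∧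
        ((U + V) ^ 2 + W ^ 2 ≤ Δ + (V + W) ^ 2) ∧
        ((U + V + W) ^ 2 ≤ Δ + (V + W) ^ 2) := by
    have hd2sum : ∑ k ∈ Finset.Ico (mx A i + 1) (z₁ + 1), x k = x z₁ := by
      rw [Finset.sum_Ico_succ_top (by omega : mx A i + 1 ≤ z₁)]
      have h0 : ∑ k ∈ Finset.Ico (mx A i + 1) z₁, x k = 0 := by
        apply Finset.sum_eq_zero
        intro k hk
        rw [Finset.mem_Ico] at hk
        exact hgapz k (by omega) (by omega)
      rw [h0, zero_add]
    by_cases hbddL : BddAbove (B.I j)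
    · -- bounded case
      have hz₁qB : z₁ ≤ mx B j := le_mx hbddL hz₁L
      have hmqB : mn B j ≤ mx B j := mn_le (mem_mx hj hbddL)
      refine ⟨∑ k ∈ Finset.Ico (mx A i + 1) (mx B j + 1), x k,
        ∑ k ∈ Finset.Ico (z₁ + 1) (mx B j + 1), x k, ?_, ?_, ?_, ?_⟩
      · rw [← Finset.sum_Ico_consecutive x
          (by omega : mx A i + 1 ≤ z₁ + 1) (by omega : z₁ + 1 ≤ mx B j + 1), hd2sum]
      all_goals {
        have hgBj : g B j = (V + ∑ k ∈ Finset.Ico (mx A i + 1) (mx B j + 1), x k) ^ 2 := by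
          rw [g_eq hj hbddL,
            ← Finset.sum_Ico_consecutive x (by omega : mn B j ≤ mx A i + 1)
              (by omega : mx A i + 1 ≤ mx B j + 1), ← hV]
        have htop : M x (mx B j + 1) ≤ Hh B j + g B j := by
          by_cases hjNF : ∃ r ∈ B.F, j < r
          · obtain ⟨r, hrF, hjr⟩ := hjNF
            have hj1F : j + 1 ∈ B.F := B.initial (by omega) hrF
            have h1 : mx B j + 1 ≤ mn B (j + 1) := by
              have := lt_blocks hj hj1F (by omega) (mem_mx hj hbddL) (mem_mn hj1F)
              omega
            have h2 := M_le_head hx hj1F h1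
            have h3 : Hh B (j + 1) = Hh B j + g B j := Finset.sum_range_succ _ _
            linarith
          · have h1 : Tt B (j + 1) = 0 := by
              rw [Tt]
              convert tsum_zero with r
              rw [g, if_neg]
              intro hrF
              exact hjNF ⟨r + (j + 1), hrF, by omega⟩
            have h2 := Hh_add_Tt (B := B) hx (j + 1)
            have h3 : Hh B (j + 1) = Hh B j + g B j := Finset.sum_range_succ _ _
            have h4 := M_le_norm hx (mx B j + 1)
            rw [h1, add_zero] at h2
            linarith
        rw [← F3, hgBj] at htop
        first
        | -- E8
          (have h1 := Mstep hx (by omega : mx A i + 1 ≤ z₁ + 1)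
           rw [hd2sum] at h1
           have h2 := Mstep hx (by omega : z₁ + 1 ≤ mx B j + 1)
           have h3 : ∑ k ∈ Finset.Ico (mx A i + 1) (mx B j + 1), x k
               = x z₁ + ∑ k ∈ Finset.Ico (z₁ + 1) (mx B j + 1), x k := by
             rw [← Finset.sum_Ico_consecutive x
               (by omega : mx A i + 1 ≤ z₁ + 1) (by omega : z₁ + 1 ≤ mx B j + 1), hd2sum]
           rw [hΔ, h3]; rw [h3] at htop; linarith [hMqA_lo, h1, h2, htop])
        | -- E6
          (have h1 := Mstep hx (by omega : mx A i + 1 ≤ mx B j + 1)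
           rw [hΔ]; linarith [hMqA_lo, h1, htop])
        | -- E7
          (have h1 := Mstep hx (by omega : mn A i ≤ mx B j + 1)
           rw [← Finset.sum_Ico_consecutive x (by omega : mn A i ≤ mx A i + 1)
               (by omega : mx A i + 1 ≤ mx B j + 1),
             ← Finset.sum_Ico_consecutive x hμm.le (by omega : mn B j ≤ mx A i + 1),
             ← hU, ← hV] at h1
           rw [hΔ]; linarith [h1, htop])
      }
    · -- unbounded case
      have hjNF : ∀ r ∈ B.F, ¬ j < r := fun r h1 h2 => no_after_unbounded hj hbddL h1 h2
      have hNtop : M x (mn B j) + (V + (setSum x (B.I j) - V)) ^ 2 = jamesNorm x ^ 2 := by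
        have h1 : Tt B (j + 1) = 0 := by
          rw [Tt]
          convert tsum_zero with r
          rw [g, if_neg]
          intro hrF
          exact hjNF (r + (j + 1)) hrF (by omega)
        have h2 := Hh_add_Tt (B := B) hx (j + 1)
        have h3 : Hh B (j + 1) = Hh B j + g B j := Finset.sum_range_succ _ _
        have h4 : g B j = (V + (setSum x (B.I j) - V)) ^ 2 := by
          rw [g, if_pos hj]
          congr 1
          ring
        rw [h1, add_zero, h3, h4, ← F3] at h2
        exact h2
      have hten := partial_tendsto hj hbddL
      have hkey : ∀ t : ℕ, mn B j ≤ t →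
          Tendsto (fun T => ∑ k ∈ Finset.Ico t T, x k) atTop
            (𝓝 (setSum x (B.I j) - ∑ k ∈ Finset.Ico (mn B j) t, x k)) := by
        intro t ht
        have heq : ∀ᶠ T in atTop,
            (∑ k ∈ Finset.Ico (mn B j) T, x k) - ∑ k ∈ Finset.Ico (mn B j) t, x k
            = ∑ k ∈ Finset.Ico t T, x k := by
          filter_upwards [eventually_ge_atTop t] with T hT
          rw [← Finset.sum_Ico_consecutive x ht hT]
          ring
        exact Tendsto.congr' heq (hten.sub_const _)
      refine ⟨setSum x (B.I j) - V, setSum x (B.I j) - V - x z₁, by ring, ?_, ?_, ?_⟩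
      · -- E8
        have h1 := Mstep hx (by omega : mx A i + 1 ≤ z₁ + 1)
        rw [hd2sum] at h1
        have hlim := hkey (z₁ + 1) (by omega)
        have hval : ∑ k ∈ Finset.Ico (mn B j) (z₁ + 1), x k = V + x z₁ := by
          rw [← Finset.sum_Ico_consecutive x (by omega : mn B j ≤ mx A i + 1)
            (by omega : mx A i + 1 ≤ z₁ + 1), hd2sum, ← hV]
        rw [hval] at hlim
        have h2 := Mstep_lim hx hlim
        rw [hΔ]; nlinarith [hNtop, h1, h2, hMqA_lo]
      · -- E6
        have hlim := hkey (mx A i + 1) (by omega)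
        have hval : ∑ k ∈ Finset.Ico (mn B j) (mx A i + 1), x k = V := hV.symm
        rw [hval] at hlim
        have h2 := Mstep_lim hx hlim
        rw [hΔ]; nlinarith [hNtop, h2, hMqA_lo]
      · -- E7
        have hlim := hkey (mn B j) (le_refl _)
        rw [Finset.Ico_self, Finset.sum_empty, sub_zero] at hlim
        have hlim2 : Tendsto (fun T => ∑ k ∈ Finset.Ico (mn A i) T, x k) atTop
            (𝓝 (U + setSum x (B.I j))) := by
          have heq : ∀ᶠ T in atTop, U + ∑ k ∈ Finset.Ico (mn B j) T, x k
              = ∑ k ∈ Finset.Ico (mn A i) T, x k := by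
            filter_upwards [eventually_ge_atTop (mn B j)] with T hT
            rw [hU, Finset.sum_Ico_consecutive x hμm.le hT]
          exact Tendsto.congr' heq (tendsto_const_nhds.add hlim)
        have h2 := Mstep_lim hx hlim2
        rw [hΔ]; nlinarith [hNtop, h2]
  -- final algebra
  have pd1 : 0 < (x (mn A i)) ^ 2 :=
    lt_of_le_of_ne (sq_nonneg _) (Ne.symm (pow_ne_zero 2 hd1))
  have pe : 0 < (x (mn B j)) ^ 2 :=
    lt_of_le_of_ne (sq_nonneg _) (Ne.symm (pow_ne_zero 2 he))
  have pd2 : 0 < (x z₁) ^ 2 :=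
    lt_of_le_of_ne (sq_nonneg _) (Ne.symm (pow_ne_zero 2 hd2))
  have hu1d1 : (x (mn A i)) ^ 2 ≤ u1 * x (mn A i) := by nlinarith [E4]
  have hu1 : u1 ≠ 0 := by
    intro h
    rw [h, zero_mul] at hu1d1
    nlinarith
  have hΔpos : 0 < Δ := by
    have : 0 < u1 ^ 2 := lt_of_le_of_ne (sq_nonneg _) (Ne.symm (pow_ne_zero 2 hu1))
    linarith [E5]
  have hUV : 0 ≤ U * V := by nlinarith [E1, E2]
  have hU0 : U ≠ 0 := by
    intro h
    rw [h] at E2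
    nlinarith [E2, hΔpos]
  have hV0 : V ≠ 0 := by
    intro h
    rw [h] at E3
    nlinarith [E3, E1, pe]
  have hVW : 0 ≤ V * W := by nlinarith [E6, E2]
  have hUW : U * W ≤ 0 := by nlinarith [E7, E2]
  have hUVpos : 0 < U * V := lt_of_le_of_ne hUV (Ne.symm (mul_ne_zero hU0 hV0))
  have hW : W = 0 := by
    have h1 : (U * W) * (V * W) ≤ 0 := mul_nonpos_of_nonpos_of_nonneg hUW hVW
    have h3 : W ^ 2 ≤ 0 := by nlinarith [h1, hUVpos]
    have h4 : W ^ 2 = 0 := le_antisymm h3 (sq_nonneg W)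
    exact pow_eq_zero_iff (two_ne_zero) |>.mp h4
  rw [hW] at E8 hWsplit
  have hW2' : W2 = - x z₁ := by linarith
  rw [hW2'] at E8
  nlinarith [E8, E2, pd2]

end Endgame


end
end JamesAux

theorem stmt14 (x : ℕ → ℝ) (hx : MemJ x) (hx0 : x ≠ 0)
    (P Q : NormingPartition x) (i : ℕ) (hi : i ∈ P.F) (j : ℕ) (hj : j ∈ Q.F) :
    P.I i ⊆ Q.I j ∨ Q.I j ⊆ P.I i ∨ P.I i ∩ Q.I j = ∅ := by
  by_contra hcon
  push_neg at hcon
  obtain ⟨hs1, hs2, hne⟩ := hcon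
  obtain ⟨a, haI, haL⟩ := Set.not_subset.mp hs1
  obtain ⟨b, hbL, hbI⟩ := Set.not_subset.mp hs2
  obtain ⟨y, hyI, hyL⟩ := hne
  have hcross : ∃ (A B : NormingPartition x) (i' j' : ℕ), JamesAux.Cross A B i' j' := by
    rcases lt_trichotomy (JamesAux.mn P i) (JamesAux.mn Q j) with h | h | h
    · refine ⟨P, Q, i, j, hi, hj, h, ?_, ⟨b, hbL, hbI⟩⟩
      exact JamesAux.mem_of_between hi (JamesAux.mem_mn hi) hyI h.le (JamesAux.mn_le hyL)
    · exfalso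
      rcases le_or_gt a b with hab | hab
      · exact haL (JamesAux.mem_of_between hj (JamesAux.mem_mn hj) hbL
          (by rw [← h]; exact JamesAux.mn_le haI) hab)
      · exact hbI (JamesAux.mem_of_between hi (JamesAux.mem_mn hi) haI
          (by rw [h]; exact JamesAux.mn_le hbL) hab.le)
    · refine ⟨Q, P, j, i, hj, hi, h, ?_, ⟨a, haI, haL⟩⟩
      exact JamesAux.mem_of_between hj (JamesAux.mem_mn hj) hyL h.le (JamesAux.mn_le hyI)
  obtain ⟨A0, B0, i0, j0, hc0⟩ := hcross
  have hSne : {n : ℕ | ∃ (A B : NormingPartition x) (i' j' : ℕ),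
      JamesAux.Cross A B i' j' ∧ n = JamesAux.mn B j'}.Nonempty :=
    ⟨JamesAux.mn B0 j0, A0, B0, i0, j0, hc0, rfl⟩
  obtain ⟨A, B, i', j', hc, hval⟩ := Nat.sInf_mem hSne
  refine JamesAux.no_cross hx A B i' j' hc ?_
  intro A' B' i'' j'' hc'
  rw [← hval]
  exact Nat.sInf_le ⟨A', B', i'', j'', hc', rfl⟩
end

section
/- For every interval I of ℕ, the functional I*(x) = ∑_{n∈I} x(n) defines an element of J* with ‖I*‖_{J*} = 1. -/
open Filter Topology Classical

section auxstmt16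

variable (x : ℕ → ℝ)

lemma aux16_zero_mem : (0:ℝ) ∈ estimates x := by
  refine ⟨0, fun _ => (0,0), ⟨fun i => i.elim0, fun i => i.elim0⟩, ?_⟩
  simp

lemma aux16_jamesNorm_nonneg (hx : MemJ x) : 0 ≤ jamesNorm x :=
  le_csSup hx (aux16_zero_mem x)

lemma aux16_single_mem {a b : ℕ} (hab : a ≤ b) :
    |∑ k ∈ Finset.Icc a b, x k| ∈ estimates x := by
  refine ⟨1, fun _ => (a, b), ⟨fun _ => hab,
    fun i j hij => absurd (Subsingleton.elim i j) (ne_of_lt hij)⟩, ?_⟩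
  rw [Fin.sum_univ_one]
  exact (Real.sqrt_sq_eq_abs _).symm

lemma aux16_shrink (I : Set ℕ) (hI : I.OrdConnected) {a b : ℕ}
    (h : (∑ k ∈ Finset.Icc a b, if k ∈ I then x k else 0) ≠ 0) :
    ∃ a' b', a ≤ a' ∧ a' ≤ b' ∧
      ∑ k ∈ Finset.Icc a' b', x k = ∑ k ∈ Finset.Icc a b, if k ∈ I then x k else 0 := by
  classical
  set T := (Finset.Icc a b).filter (· ∈ I) with hT
  have hsum : (∑ k ∈ Finset.Icc a b, if k ∈ I then x k else 0) = ∑ k ∈ T, x k :=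
    (Finset.sum_filter _ _).symm
  have hTne : T.Nonempty := by
    by_contra hc
    rw [Finset.not_nonempty_iff_eq_empty] at hc
    exact h (by rw [hsum, hc, Finset.sum_empty])
  set a' := T.min' hTne with ha'
  set b' := T.max' hTne with hb'
  have ha'T : a' ∈ T := T.min'_mem hTne
  have hb'T : b' ∈ T := T.max'_mem hTne
  have ha'I : a' ∈ I := (Finset.mem_filter.mp ha'T).2
  have hb'I : b' ∈ I := (Finset.mem_filter.mp hb'T).2
  have ha'ab : a' ∈ Finset.Icc a b := (Finset.mem_filter.mp ha'T).1
  have hb'ab : b' ∈ Finset.Icc a b := (Finset.mem_filter.mp hb'T).1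
  have hTeq : T = Finset.Icc a' b' := by
    apply Finset.Subset.antisymm
    · intro k hk
      exact Finset.mem_Icc.mpr ⟨T.min'_le k hk, T.le_max' k hk⟩
    · intro k hk
      rw [Finset.mem_Icc] at hk
      have hkI : k ∈ I := hI.out ha'I hb'I ⟨hk.1, hk.2⟩
      refine Finset.mem_filter.mpr ⟨Finset.mem_Icc.mpr ⟨?_, ?_⟩, hkI⟩
      · exact le_trans (Finset.mem_Icc.mp ha'ab).1 hk.1
      · exact le_trans hk.2 (Finset.mem_Icc.mp hb'ab).2
  exact ⟨a', b', (Finset.mem_Icc.mp ha'ab).1, T.min'_le b' hb'T, by rw [hsum, hTeq]⟩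

lemma aux16_interval_bound (I : Set ℕ) (hI : I.OrdConnected) (hx : MemJ x) (a b : ℕ) :
    |∑ k ∈ Finset.Icc a b, if k ∈ I then x k else 0| ≤ jamesNorm x := by
  by_cases h : (∑ k ∈ Finset.Icc a b, if k ∈ I then x k else 0) = 0
  · rw [h, abs_zero]; exact aux16_jamesNorm_nonneg x hx
  · obtain ⟨a', b', _, hab', heq⟩ := aux16_shrink x I hI h
    rw [← heq]
    exact le_csSup hx (aux16_single_mem x hab')

lemma aux16_partial_bound (I : Set ℕ) (hI : I.OrdConnected) (hx : MemJ x) (N : ℕ) :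
    |∑ k ∈ Finset.range N, if k ∈ I then x k else 0| ≤ jamesNorm x := by
  cases N with
  | zero => simpa using aux16_jamesNorm_nonneg x hx
  | succ n =>
    have hr : Finset.range (n+1) = Finset.Icc 0 n := by
      rw [Finset.range_eq_Ico, Finset.Ico_add_one_right_eq_Icc]
    rw [hr]
    exact aux16_interval_bound x I hI hx 0 n

lemma aux16_cauchy (I : Set ℕ) (hI : I.OrdConnected) (hx : MemJ x) :
    CauchySeq (fun N => ∑ k ∈ Finset.range N, if k ∈ I then x k else 0) := by
  set S := fun N => ∑ k ∈ Finset.range N, if k ∈ I then x k else 0 with hS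
  by_contra hc
  rw [Metric.cauchySeq_iff] at hc
  push_neg at hc
  obtain ⟨ε, hε, hcc⟩ := hc
  have H : ∀ s : ℕ, ∃ p : ℕ × ℕ, s ≤ p.1 ∧ p.1 ≤ p.2 ∧
      ε ≤ |∑ k ∈ Finset.Icc p.1 p.2, x k| := by
    intro s
    obtain ⟨m, hm, n, hn, hd⟩ := hcc s
    rw [Real.dist_eq] at hd
    have key : ∀ m n : ℕ, s ≤ n → n < m → ε ≤ |S m - S n| →
        ∃ p : ℕ × ℕ, s ≤ p.1 ∧ p.1 ≤ p.2 ∧ ε ≤ |∑ k ∈ Finset.Icc p.1 p.2, x k| := by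
      intro m n hns hnm hd
      have hsub : S m - S n = ∑ k ∈ Finset.Ico n m, if k ∈ I then x k else 0 := by
        rw [hS]; exact (Finset.sum_Ico_eq_sub _ (le_of_lt hnm)).symm
      obtain ⟨t, rfl⟩ : ∃ t, m = t + 1 := ⟨m - 1, by omega⟩
      rw [hsub, Finset.Ico_add_one_right_eq_Icc] at hd
      have hne0 : (∑ k ∈ Finset.Icc n t, if k ∈ I then x k else 0) ≠ 0 := by
        intro h0; rw [h0, abs_zero] at hd; linarith
      obtain ⟨a', b', ha', hab', heq⟩ := aux16_shrink x I hI hne0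
      exact ⟨(a', b'), le_trans hns ha', hab', by rw [heq]; exact hd⟩
    rcases lt_trichotomy n m with h | h | h
    · exact key m n hn h hd
    · exfalso; rw [h, sub_self, abs_zero] at hd; linarith
    · refine key n m hm h ?_
      rw [abs_sub_comm]; exact hd
  choose p hp1 hp2 hp3 using H
  set g : ℕ → ℕ × ℕ := fun i => Nat.rec (p 0) (fun _ q => p (q.2 + 1)) i with hgdef
  have hgs : ∀ i, g (i+1) = p ((g i).2 + 1) := fun i => rfl
  have hg1 : ∀ i, (g i).1 ≤ (g i).2 := by
    intro i; cases i with
    | zero => exact hp2 0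
    | succ j => rw [hgs]; exact hp2 _
  have hg3 : ∀ i, ε ≤ |∑ k ∈ Finset.Icc (g i).1 (g i).2, x k| := by
    intro i; cases i with
    | zero => exact hp3 0
    | succ j => rw [hgs]; exact hp3 _
  have hgap : ∀ i, (g i).2 < (g (i+1)).1 := by
    intro i; rw [hgs]; exact lt_of_lt_of_le (Nat.lt_succ_self _) (hp1 _)
  have hmono : ∀ i j : ℕ, i < j → (g i).2 < (g j).1 := by
    intro i j hij
    induction j with
    | zero => omega
    | succ j ih =>
      rcases Nat.lt_succ_iff_lt_or_eq.mp hij with h | h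
      · exact lt_trans ((ih h).trans_le (hg1 j)) (hgap j)
      · subst h; exact hgap i
  have hM0 : 0 ≤ jamesNorm x := aux16_jamesNorm_nonneg x hx
  obtain ⟨n, hn⟩ := exists_nat_gt ((jamesNorm x / ε) ^ 2)
  set f : Fin n → ℕ × ℕ := fun i => g i with hf
  have hadm : Admissible n f := ⟨fun i => hg1 i, fun i j hij => hmono i j hij⟩
  set r := Real.sqrt (∑ i : Fin n, (∑ k ∈ Finset.Icc (f i).1 (f i).2, x k) ^ 2) with hr
  have hrM : r ≤ jamesNorm x := le_csSup hx ⟨n, f, hadm, rfl⟩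
  have hlow : Real.sqrt (n * ε ^ 2) ≤ r := by
    apply Real.sqrt_le_sqrt
    have hterm : ∀ i : Fin n, ε ^ 2 ≤ (∑ k ∈ Finset.Icc (f i).1 (f i).2, x k) ^ 2 := by
      intro i
      calc ε ^ 2 ≤ |∑ k ∈ Finset.Icc (f i).1 (f i).2, x k| ^ 2 :=
            pow_le_pow_left₀ (le_of_lt hε) (hg3 i) 2
        _ = _ := sq_abs _
    calc (n : ℝ) * ε ^ 2 = ∑ _i : Fin n, ε ^ 2 := by
          rw [Finset.sum_const, Finset.card_univ, Fintype.card_fin, nsmul_eq_mul]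
      _ ≤ _ := Finset.sum_le_sum (fun i _ => hterm i)
  have h1 : jamesNorm x / ε < Real.sqrt n := (Real.lt_sqrt (by positivity)).mpr hn
  have h2 : jamesNorm x < Real.sqrt n * ε := (div_lt_iff₀ hε).mp h1
  have h3 : Real.sqrt (n * ε ^ 2) = Real.sqrt n * ε := by
    rw [Real.sqrt_mul (Nat.cast_nonneg n), Real.sqrt_sq (le_of_lt hε)]
  linarith

lemma aux16_norm_le (I : Set ℕ) (hI : I.OrdConnected)
    (hx : MemJ x) (hxn : jamesNorm x ≤ 1) : |setSum x I| ≤ 1 := by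
  obtain ⟨l, hl⟩ := cauchySeq_tendsto_of_complete (aux16_cauchy x I hI hx)
  have hss : setSum x I = l := hl.limUnder_eq
  rw [hss]
  have habs := hl.abs
  have hb : |l| ≤ jamesNorm x :=
    le_of_tendsto habs (Filter.Eventually.of_forall (aux16_partial_bound x I hI hx))
  linarith

lemma aux16_mem (I : Set ℕ) (hne : I.Nonempty) :
    ∃ x : ℕ → ℝ, MemJ x ∧ jamesNorm x ≤ 1 ∧ (1:ℝ) = |setSum x I| := by
  classical
  obtain ⟨n₀, hn₀⟩ := hne
  set x : ℕ → ℝ := fun k => if k = n₀ then 1 else 0 with hx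
  have hub : ∀ r ∈ estimates x, r ≤ 1 := by
    rintro r ⟨n, f, ⟨h1, h2⟩, rfl⟩
    have hterm : ∀ i : Fin n, (∑ k ∈ Finset.Icc (f i).1 (f i).2, x k) ^ 2
        = if n₀ ∈ Finset.Icc (f i).1 (f i).2 then (1:ℝ) else 0 := by
      intro i
      rw [hx]
      rw [Finset.sum_ite_eq' (Finset.Icc (f i).1 (f i).2) n₀ (fun _ => (1:ℝ))]
      split <;> norm_num
    have hsum : (∑ i : Fin n, (∑ k ∈ Finset.Icc (f i).1 (f i).2, x k) ^ 2) ≤ 1 := by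
      rw [Finset.sum_congr rfl (fun i _ => hterm i), Finset.sum_boole]
      have hcard : (Finset.univ.filter
          (fun i : Fin n => n₀ ∈ Finset.Icc (f i).1 (f i).2)).card ≤ 1 := by
        rw [Finset.card_le_one]
        intro a ha b hb
        simp only [Finset.mem_filter, Finset.mem_Icc] at ha hb
        by_contra hab
        rcases lt_or_gt_of_ne hab with h | h
        · have := h2 a b h; omega
        · have := h2 b a h; omega
      exact_mod_cast hcard
    calc Real.sqrt _ ≤ Real.sqrt 1 := Real.sqrt_le_sqrt hsum
      _ = 1 := Real.sqrt_one
  have hmem : MemJ x := ⟨1, fun r hr => hub r hr⟩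
  have hjn : jamesNorm x ≤ 1 := csSup_le ⟨0, aux16_zero_mem x⟩ hub
  have htend : Tendsto (fun N => ∑ k ∈ Finset.range N, if k ∈ I then x k else 0)
      atTop (𝓝 1) := by
    apply tendsto_atTop_of_eventually_const (i₀ := n₀ + 1)
    intro N hN
    have hfun : ∀ k, (if k ∈ I then x k else 0) = if k = n₀ then (1:ℝ) else 0 := by
      intro k
      rw [hx]
      by_cases hk : k = n₀
      · subst hk; simp [hn₀]
      · simp [hk]
    rw [Finset.sum_congr rfl (fun k _ => hfun k),
      Finset.sum_ite_eq' (Finset.range N) n₀ (fun _ => (1:ℝ)),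
      if_pos (Finset.mem_range.mpr (by omega))]
  refine ⟨x, hmem, hjn, ?_⟩
  have : setSum x I = 1 := htend.limUnder_eq
  rw [this]; norm_num

end auxstmt16

theorem stmt16 (I : Set ℕ) (hne : I.Nonempty) (hI : I.OrdConnected) :
    IsLUB {r : ℝ | ∃ x : ℕ → ℝ, MemJ x ∧ jamesNorm x ≤ 1 ∧ r = |setSum x I|} 1 := by
  constructor
  · rintro r ⟨x, hx, hxn, rfl⟩
    exact aux16_norm_le x I hI hx hxn
  · intro b hb
    obtain ⟨x, h1, h2, h3⟩ := aux16_mem I hne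
    exact hb ⟨x, h1, h2, h3⟩
end
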